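/- arXiv:2101.12697 — 6 statements merged into one kernel-verified Lean document; each statement's English description precedes it below -/
import Mathlib

section
/- Let z₀ > 0 and t be real numbers, let θ(z) = (z/4)(1/z₀² + 1/z²), and let u > 0. Then for the point z = z₀ + u·e^{iπ/4} on the steepest-descent ray emanating from z₀, one has the exact identity Re(2 i t θ(z)) = − t u² (√2 z₀ + u) / ( 2√2 · z₀² · (z₀² + √2 z₀ u + u²) ). -/
lemma aux_re (t z₀ a b : ℝ) (hz₀ : z₀ ≠ 0) (hab : a^2 + b^2 ≠ 0) :
    (2 * Complex.I * (t : ℝ) * (((a:ℂ) + (b:ℂ)*Complex.I) / 4 *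
      (1 / (z₀ : ℂ) ^ 2 + 1 / ((a:ℂ) + (b:ℂ)*Complex.I) ^ 2))).re =
    (t * b / 2) * (z₀^2 - (a^2 + b^2)) / (z₀^2 * (a^2 + b^2)) := by
  have h2 : (a^2 + b^2)^2 ≠ 0 := pow_ne_zero _ hab
  have h3 : a^2*b^2*2 + a^4 + b^4 ≠ 0 := by
    rw [show a^2*b^2*2 + a^4 + b^4 = (a^2+b^2)^2 by ring]; exact h2
  have h4 : a^2*b^2*32 + a^4*16 + b^4*16 ≠ 0 := by
    rw [show a^2*b^2*32 + a^4*16 + b^4*16 = 16*(a^2+b^2)^2 by ring]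
    exact mul_ne_zero (by norm_num) h2
  have h5 : a^2*z₀^2*2 + b^2*z₀^2*2 ≠ 0 := by
    rw [show a^2*z₀^2*2 + b^2*z₀^2*2 = 2*z₀^2*(a^2+b^2) by ring]
    exact mul_ne_zero (mul_ne_zero (by norm_num) (pow_ne_zero _ hz₀)) hab
  simp only [Complex.div_re, Complex.div_im, Complex.add_re, Complex.add_im, Complex.mul_re,
    Complex.mul_im, Complex.ofReal_re, Complex.ofReal_im, Complex.I_re, Complex.I_im,
    Complex.one_re, Complex.one_im, Complex.normSq_apply, Complex.re_ofNat, Complex.im_ofNat,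
    Complex.inv_re, Complex.inv_im, pow_two]
  ring_nf
  rw [show a^2*b^2*2 + a^4 + b^4 = (a^2+b^2)^2 by ring,
    show a^2*z₀^2 + b^2*z₀^2 = z₀^2*(a^2+b^2) by ring]
  have hz2 : z₀^2 ≠ 0 := pow_ne_zero _ hz₀
  field_simp
  ring

/-- For `z₀ > 0`, `t : ℝ`, `u > 0` and the point `z = z₀ + u·e^{iπ/4}` on the
steepest-descent ray, with `θ(z) = (z/4)(1/z₀² + 1/z²)`, one has
`Re(2 i t θ(z)) = − t u² (√2 z₀ + u) / ( 2√2 z₀² (z₀² + √2 z₀ u + u²) )`. -/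
theorem stmt_1 (z₀ t u : ℝ) (hz₀ : 0 < z₀) (hu : 0 < u)
    (z : ℂ) (hz : z = (z₀ : ℂ) + (u : ℂ) * Complex.exp (Complex.I * ((Real.pi : ℂ) / 4))) :
    (2 * Complex.I * (t : ℂ) * (z / 4 * (1 / (z₀ : ℂ) ^ 2 + 1 / z ^ 2))).re =
      -(t * u ^ 2 * (Real.sqrt 2 * z₀ + u)) /
        (2 * Real.sqrt 2 * z₀ ^ 2 * (z₀ ^ 2 + Real.sqrt 2 * z₀ * u + u ^ 2)) := by
  set s := Real.sqrt 2 with hsdef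
  have hs0 : 0 < s := Real.sqrt_pos.mpr (by norm_num)
  have hs : s ^ 2 = 2 := Real.sq_sqrt (by norm_num)
  have hexp : Complex.exp (Complex.I * ((Real.pi : ℂ) / 4)) = (s/2 : ℝ) + (s/2 : ℝ) * Complex.I := by
    rw [mul_comm, show ((Real.pi : ℂ)/4) = ((Real.pi/4 : ℝ) : ℂ) by push_cast; ring,
      Complex.exp_mul_I, ← Complex.ofReal_cos, ← Complex.ofReal_sin,
      Real.cos_pi_div_four, Real.sin_pi_div_four]
  have hz' : z = ((z₀ + u*s/2 : ℝ) : ℂ) + ((u*s/2 : ℝ) : ℂ) * Complex.I := by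
    rw [hz, hexp]; push_cast; ring
  have hN : (z₀ + u*s/2)^2 + (u*s/2)^2 = z₀^2 + s*z₀*u + u^2 := by
    linear_combination (u^2/2) * hs
  have hNpos : 0 < z₀^2 + s*z₀*u + u^2 := by positivity
  rw [hz', aux_re t z₀ _ _ (ne_of_gt hz₀) (by rw [hN]; exact ne_of_gt hNpos), hN]
  have hs' : s ≠ 0 := ne_of_gt hs0
  have hz₀' : z₀ ≠ 0 := ne_of_gt hz₀
  field_simp
  ring_nf
  linear_combination (-t*u*(s*z₀+u)) * hs
end

section
/- Let z₀ > 0, let t > 0, and let θ(z) = (z/4)(1/z₀² + 1/z²). Then for every u with 0 < u ≤ z₀ and z = z₀ + u·e^{iπ/4}, one has Re(2 i t θ(z)) ≤ − t u² / (2(2+√2) z₀³); in particular |e^{2 i t θ(z)}| ≤ exp(− t u² / (7 z₀³)). -/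
lemma stmt_2_re_formula (z₀ t : ℝ) (hz₀ : z₀ ≠ 0) (z : ℂ) (hzne : z ≠ 0) :
    (2 * Complex.I * (t : ℂ) * (z / 4 * (1 / (z₀ : ℂ) ^ 2 + 1 / z ^ 2))).re
      = -(t * z.im)/(2*z₀^2) + (t * z.im)/(2 * Complex.normSq z) := by
  have hN : (Complex.normSq z : ℝ) ≠ 0 := by simpa using (Complex.normSq_pos.2 hzne).ne'
  have hz₀c : ((z₀:ℝ) : ℂ) ≠ 0 := by exact_mod_cast hz₀
  have h : z / 4 * (1 / (z₀ : ℂ) ^ 2 + 1 / z ^ 2)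
      = ((1/(4*z₀^2) : ℝ) : ℂ) * z + 1/(4*z) := by
    push_cast; field_simp
  rw [h]
  have hre : z.re * z.re + z.im * z.im ≠ 0 := by
    simpa [Complex.normSq_apply] using hN
  simp only [Complex.mul_re, Complex.add_re, Complex.mul_im, Complex.add_im,
    Complex.I_re, Complex.I_im, Complex.ofReal_re, Complex.ofReal_im,
    Complex.div_re, Complex.div_im, Complex.one_re, Complex.one_im,
    Complex.normSq_apply,
    Complex.normSq, MonoidWithZeroHom.coe_mk, ZeroHom.coe_mk]
  norm_num
  field_simp
  ring

/-- For `z₀ > 0`, `t > 0`, `0 < u ≤ z₀` and `z = z₀ + u·e^{iπ/4}`, with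
`θ(z) = (z/4)(1/z₀² + 1/z²)`, one has `Re(2itθ(z)) ≤ − t u² / (2(2+√2) z₀³)`;
in particular `|e^{2itθ(z)}| ≤ exp(− t u² / (7 z₀³))`. -/
theorem stmt_2 (z₀ t u : ℝ) (hz₀ : 0 < z₀) (ht : 0 < t) (hu : 0 < u) (huz : u ≤ z₀)
    (z : ℂ) (hz : z = (z₀ : ℂ) + (u : ℂ) * Complex.exp (Complex.I * ((Real.pi : ℂ) / 4))) :
    (2 * Complex.I * (t : ℂ) * (z / 4 * (1 / (z₀ : ℂ) ^ 2 + 1 / z ^ 2))).re ≤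
        -(t * u ^ 2) / (2 * (2 + Real.sqrt 2) * z₀ ^ 3) ∧
      ‖(Complex.exp (2 * Complex.I * (t : ℂ) * (z / 4 * (1 / (z₀ : ℂ) ^ 2 + 1 / z ^ 2))))‖ ≤
        Real.exp (-(t * u ^ 2) / (7 * z₀ ^ 3)) := by
  set s := Real.sqrt 2 with hs_def
  have hs2 : s ^ 2 = 2 := Real.sq_sqrt (by norm_num)
  have hs_pos : 0 < s := Real.sqrt_pos.2 (by norm_num)
  have hs1 : 1 ≤ s := by nlinarith
  have hs32 : s ≤ 3/2 := by nlinarith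
  set a := u * s / 2 with ha_def
  have ha_pos : 0 < a := by positivity
  -- coordinates of z
  have hcoord : z.re = z₀ + a ∧ z.im = a := by
    have h1 : Complex.I * ((Real.pi : ℂ) / 4) = ((Real.pi/4 : ℝ) : ℂ) * Complex.I := by
      push_cast; ring
    have hc : Complex.cos (((Real.pi/4 : ℝ)) : ℂ) = ((Real.sqrt 2/2 : ℝ) : ℂ) := by
      rw [← Complex.ofReal_cos, Real.cos_pi_div_four]
    have hsn : Complex.sin (((Real.pi/4 : ℝ)) : ℂ) = ((Real.sqrt 2/2 : ℝ) : ℂ) := by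
      rw [← Complex.ofReal_sin, Real.sin_pi_div_four]
    rw [h1, Complex.exp_mul_I, hc, hsn] at hz
    rw [hz]
    constructor <;> simp [ha_def, hs_def] <;> ring
  obtain ⟨hzre, hzim⟩ := hcoord
  have hzne : z ≠ 0 := by
    intro h
    rw [h] at hzre
    simp at hzre
    nlinarith
  have hNval : Complex.normSq z = (z₀ + a)^2 + a^2 := by
    rw [Complex.normSq_apply, hzre, hzim]; ring
  have hNpos : 0 < (z₀ + a)^2 + a^2 := by positivity
  have key := stmt_2_re_formula z₀ t hz₀.ne' z hzne
  rw [hzim, hNval] at key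
  have h2s : (0:ℝ) < 2 + s := by positivity
  have ha2 : a ^ 2 = u ^ 2 / 2 := by
    rw [ha_def]; nlinarith
  have main : -(t * a)/(2*z₀^2) + (t * a)/(2 * ((z₀ + a)^2 + a^2)) ≤
      -(t * u ^ 2) / (2 * (2 + s) * z₀ ^ 3) := by
    have heq : -(t * a)/(2*z₀^2) + (t * a)/(2 * ((z₀ + a)^2 + a^2))
        = (-(t * a) * (((z₀ + a)^2 + a^2) - z₀^2)) / (2 * z₀^2 * ((z₀ + a)^2 + a^2)) := by
      field_simp; ring
    rw [heq, div_le_div_iff₀ (by positivity) (by positivity)]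
    have hu2 : u ^ 2 ≤ z₀ ^ 2 := by nlinarith
    have hineq : (z₀ + a) ^ 2 + a ^ 2 ≤ (z₀ + a) * (2 + s) * z₀ := by nlinarith
    have hid : a * ((z₀ + a) ^ 2 + a ^ 2 - z₀ ^ 2) = u ^ 2 * (z₀ + a) := by
      linear_combination (2 * (z₀ + a)) * ha2
    calc -(t * a) * ((z₀ + a) ^ 2 + a ^ 2 - z₀ ^ 2) * (2 * (2 + s) * z₀ ^ 3)
        = -(t * u ^ 2 * (z₀ + a)) * (2 * (2 + s) * z₀ ^ 3) := by
          linear_combination (-(t * 2 * (2 + s) * z₀ ^ 3)) * hid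
      _ ≤ -(t * u ^ 2) * (2 * z₀ ^ 2 * ((z₀ + a) ^ 2 + a ^ 2)) := by
          have hmul := mul_le_mul_of_nonneg_left hineq
            (show (0:ℝ) ≤ 2 * t * u ^ 2 * z₀ ^ 2 by positivity)
          linarith [hmul]
  constructor
  · calc (2 * Complex.I * (t : ℂ) * (z / 4 * (1 / (z₀ : ℂ) ^ 2 + 1 / z ^ 2))).re
        = -(t * a)/(2*z₀^2) + (t * a)/(2 * ((z₀ + a)^2 + a^2)) := key
      _ ≤ -(t * u ^ 2) / (2 * (2 + s) * z₀ ^ 3) := main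
  · rw [Complex.norm_exp, Real.exp_le_exp]
    calc (2 * Complex.I * (t : ℂ) * (z / 4 * (1 / (z₀ : ℂ) ^ 2 + 1 / z ^ 2))).re
        ≤ -(t * u ^ 2) / (2 * (2 + s) * z₀ ^ 3) := by rw [key]; exact main
      _ ≤ -(t * u ^ 2) / (7 * z₀ ^ 3) := by
          rw [neg_div, neg_div, neg_le_neg_iff]
          apply div_le_div_of_nonneg_left (by positivity) (by positivity)
          nlinarith [pow_pos hz₀ 3]
end

section
/- Let z₀ > 0, let t > 0, and let θ(z) = (z/4)(1/z₀² + 1/z²). Then for every h with 0 < h ≤ z₀/√2 and z = h·e^{iπ/4}, one has Re(2 i t θ(z)) ≥ t/(4 z₀); in particular |e^{−2 i t θ(z)}| ≤ e^{− t/(4 z₀)}. -/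
/-- For `z₀ > 0`, `t > 0`, `0 < h ≤ z₀/√2` and `z = h·e^{iπ/4}`, with
`θ(z) = (z/4)(1/z₀² + 1/z²)`, one has `Re(2itθ(z)) ≥ t/(4z₀)`; in particular
`|e^{−2itθ(z)}| ≤ e^{−t/(4z₀)}`. -/
theorem stmt_3 (z₀ t h : ℝ) (hz₀ : 0 < z₀) (ht : 0 < t) (hh : 0 < h)
    (hhz : h ≤ z₀ / Real.sqrt 2)
    (z : ℂ) (hz : z = (h : ℂ) * Complex.exp (Complex.I * ((Real.pi : ℂ) / 4))) :
    t / (4 * z₀) ≤ (2 * Complex.I * (t : ℂ) * (z / 4 * (1 / (z₀ : ℂ) ^ 2 + 1 / z ^ 2))).re ∧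
      ‖(Complex.exp (-(2 * Complex.I * (t : ℂ) * (z / 4 * (1 / (z₀ : ℂ) ^ 2 + 1 / z ^ 2)))))‖ ≤
        Real.exp (-(t / (4 * z₀))) := by
  have hs2 : (0:ℝ) < Real.sqrt 2 := Real.sqrt_pos.mpr (by norm_num)
  have hmul : Real.sqrt 2 * Real.sqrt 2 = 2 := Real.mul_self_sqrt (by norm_num)
  have hh0 : (h : ℂ) ≠ 0 := by exact_mod_cast hh.ne'
  have hcC : ((Real.sqrt 2 : ℝ) : ℂ) ^ 2 = 2 := by
    rw [← Complex.ofReal_pow, sq, hmul]; norm_num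
  have hexp : Complex.exp (Complex.I * ((Real.pi : ℂ) / 4))
      = (Real.sqrt 2 / 2 : ℝ) + (Real.sqrt 2 / 2 : ℝ) * Complex.I := by
    rw [mul_comm, Complex.exp_mul_I]
    have h1 : ((Real.pi : ℂ) / 4) = ((Real.pi / 4 : ℝ) : ℂ) := by push_cast; ring
    rw [h1, ← Complex.ofReal_cos, ← Complex.ofReal_sin,
      Real.cos_pi_div_four, Real.sin_pi_div_four]
  have hzz : z = (h : ℂ) * ((Real.sqrt 2 / 2 : ℝ) + (Real.sqrt 2 / 2 : ℝ) * Complex.I) := by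
    rw [hz, hexp]
  have hzsq : z ^ 2 = (h : ℂ) ^ 2 * Complex.I := by
    rw [hzz]; push_cast
    linear_combination ((h:ℂ)^2 * Complex.I / 2) * hcC
      + ((h:ℂ)^2 * ((Real.sqrt 2:ℝ):ℂ)^2 / 4) * Complex.I_sq
  have h2 : (1:ℂ) / z ^ 2 = -Complex.I / (h : ℂ) ^ 2 := by
    rw [hzsq, div_eq_div_iff (mul_ne_zero (pow_ne_zero 2 hh0) Complex.I_ne_zero)
      (pow_ne_zero 2 hh0)]
    linear_combination (h:ℂ)^2 * Complex.I_sq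
  have hE : (2 * Complex.I * (t : ℂ) * (z / 4 * (1 / (z₀ : ℂ) ^ 2 + 1 / z ^ 2)))
      = ((t * (Real.sqrt 2 / 2) * (1 / (2 * h) - h / (2 * z₀ ^ 2)) : ℝ) : ℂ)
        + ((t * (Real.sqrt 2 / 2) * (1 / (2 * h) + h / (2 * z₀ ^ 2)) : ℝ) : ℂ) * Complex.I := by
    have hinv : (h:ℂ) * (h:ℂ)⁻¹ = 1 := mul_inv_cancel₀ hh0
    rw [show (1 / (z₀ : ℂ) ^ 2 + 1 / z ^ 2)
        = 1 / (z₀ : ℂ) ^ 2 + -Complex.I / (h:ℂ) ^ 2 by rw [← h2], hzz]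
    push_cast
    linear_combination ((t:ℂ) * ((Real.sqrt 2:ℝ):ℂ)/2 / 2
        * ((h:ℂ)/((z₀:ℂ))^2 - (1+Complex.I)/(h:ℂ))) * Complex.I_sq
      + (-(Complex.I^2 + Complex.I^3) * (t:ℂ) * ((Real.sqrt 2:ℝ):ℂ)/4 * ((h:ℂ))⁻¹) * hinv
  have hre : (2 * Complex.I * (t : ℂ) * (z / 4 * (1 / (z₀ : ℂ) ^ 2 + 1 / z ^ 2))).re
      = t * (Real.sqrt 2 / 2) * (1 / (2 * h) - h / (2 * z₀ ^ 2)) := by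
    rw [hE]; simp only [Complex.add_re, Complex.mul_re, Complex.I_re, Complex.I_im,
      Complex.ofReal_re, Complex.ofReal_im]; ring
  have h1 : h * Real.sqrt 2 ≤ z₀ := (le_div_iff₀ hs2).mp hhz
  have hd : 0 ≤ z₀ - h * Real.sqrt 2 := by linarith
  have hnum : 0 ≤ Real.sqrt 2 * z₀ ^ 2 - Real.sqrt 2 * h ^ 2 - h * z₀ := by
    nlinarith [mul_nonneg hh.le hd, mul_nonneg hs2.le (sq_nonneg (z₀ - h * Real.sqrt 2)), hmul]
  have hediff : t * (Real.sqrt 2 / 2) * (1 / (2 * h) - h / (2 * z₀ ^ 2)) - t / (4 * z₀)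
      = t * (Real.sqrt 2 * z₀ ^ 2 - Real.sqrt 2 * h ^ 2 - h * z₀) / (4 * h * z₀ ^ 2) := by
    field_simp; ring
  have key : t / (4 * z₀) ≤ t * (Real.sqrt 2 / 2) * (1 / (2 * h) - h / (2 * z₀ ^ 2)) := by
    have hpos : 0 ≤ t * (Real.sqrt 2 * z₀ ^ 2 - Real.sqrt 2 * h ^ 2 - h * z₀) / (4 * h * z₀ ^ 2) := by
      apply div_nonneg (mul_nonneg ht.le hnum) (by positivity)
    linarith [hediff ▸ hpos]
  refine ⟨by rw [hre]; exact key, ?_⟩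
  rw [Complex.norm_exp, Complex.neg_re, hre]
  exact Real.exp_le_exp.mpr (by linarith)
end

section
/- Let z₀ > 0 and let ν : ℝ → ℝ be bounded measurable on [−z₀, z₀] and continuous at a point x₀ ∈ (−z₀, z₀). Then, with δ(z) = exp( i ∫_{−z₀}^{z₀} ν(s)/(s−z) ds ), the boundary values satisfy lim_{ε→0⁺} δ(x₀+iε)/δ(x₀−iε) = e^{−2π ν(x₀)}. In particular, if ν(s) = −(1/2π) log(1+|r(s)|²) for a function r continuous at x₀, then the limit equals 1 + |r(x₀)|². -/
open MeasureTheory Filter Real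

lemma aux_II {E : Type*} [NormedAddCommGroup E] {f : ℝ → E} {a b C : ℝ}
    (hf : AEStronglyMeasurable f volume)
    (h : ∀ s ∈ Set.uIoc a b, ‖f s‖ ≤ C) : IntervalIntegrable f volume a b := by
  rw [intervalIntegrable_iff]
  apply Integrable.mono' (g := fun _ => C)
    (integrableOn_const measure_Ioc_lt_top.ne) hf.restrict
  filter_upwards [ae_restrict_mem measurableSet_uIoc] with x hx using h x hx

lemma aux_kernel (x₀ : ℝ) {ε : ℝ} (hε : 0 < ε) (a b : ℝ) :
    ∫ s in a..b, ε / ((s - x₀)^2 + ε^2)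
      = arctan ((b - x₀)/ε) - arctan ((a - x₀)/ε) := by
  have h1 : ∀ s : ℝ, ε / ((s - x₀)^2 + ε^2) = ε⁻¹ * (1 + ((s - x₀)/ε)^2)⁻¹ := by
    intro s
    have : (s - x₀)^2 + ε^2 ≠ 0 := by positivity
    field_simp
    ring
  rw [intervalIntegral.integral_congr (g := fun s => ε⁻¹ * (1 + ((s - x₀)/ε)^2)⁻¹)
    (fun s _ => h1 s)]
  rw [intervalIntegral.integral_comp_sub_right (a := a) (b := b)
    (fun u => ε⁻¹ * (1 + (u/ε)^2)⁻¹) x₀]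
  rw [intervalIntegral.integral_comp_div (a := a - x₀) (b := b - x₀) (c := ε)
    (fun t => ε⁻¹ * (1 + t^2)⁻¹) hε.ne',
    intervalIntegral.integral_const_mul, integral_inv_one_add_sq, smul_eq_mul]
  field_simp

lemma aux_arctan {c : ℝ} (hc : 0 < c) :
    Tendsto (fun ε : ℝ => arctan (c / ε)) (nhdsWithin 0 (Set.Ioi 0)) (nhds (π/2)) := by
  have h1 : Tendsto (fun ε : ℝ => c / ε) (nhdsWithin 0 (Set.Ioi 0)) atTop := by
    simpa [div_eq_mul_inv] using tendsto_inv_nhdsGT_zero.const_mul_atTop hc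
  exact (tendsto_arctan_atTop.mono_right nhdsWithin_le_nhds).comp h1

set_option maxHeartbeats 1000000 in
lemma aux_poisson (z₀ M : ℝ) (hz₀ : 0 < z₀) (ν : ℝ → ℝ) (hmeas : Measurable ν)
    (hbound : ∀ s ∈ Set.Icc (-z₀) z₀, |ν s| ≤ M)
    (x₀ : ℝ) (hx₀ : x₀ ∈ Set.Ioo (-z₀) z₀) (hcont : ContinuousAt ν x₀) :
    Tendsto (fun ε : ℝ => ∫ s in (-z₀)..z₀, ε * ν s / ((s - x₀)^2 + ε^2))
      (nhdsWithin 0 (Set.Ioi 0)) (nhds (π * ν x₀)) := by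
  have hM0 : 0 ≤ M := le_trans (abs_nonneg _) (hbound x₀ ⟨hx₀.1.le, hx₀.2.le⟩)
  set P : ℝ → ℝ → ℝ := fun ε s => ε / ((s - x₀)^2 + ε^2) with hP
  have hPnn : ∀ {ε : ℝ}, 0 < ε → ∀ s : ℝ, 0 ≤ P ε s := by
    intro ε hε s; have : (0:ℝ) < (s - x₀)^2 + ε^2 := by positivity
    exact (div_pos hε this).le
  have hPle : ∀ {ε : ℝ}, 0 < ε → ∀ s : ℝ, P ε s ≤ ε⁻¹ := by
    intro ε hε s
    rw [hP]
    rw [div_le_iff₀ (by positivity)]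
    calc ε = ε⁻¹ * ε^2 := by field_simp
      _ ≤ ε⁻¹ * ((s - x₀)^2 + ε^2) := by
          apply mul_le_mul_of_nonneg_left (by nlinarith [sq_nonneg (s - x₀)]) (by positivity)
  have hPcont : ∀ {ε : ℝ}, 0 < ε → Continuous (P ε) := by
    intro ε hε
    apply continuous_const.div (by continuity)
    intro s; positivity
  -- integrability of (ν - c) * P ε on subintervals of [-z₀,z₀]
  have hInt : ∀ {ε : ℝ}, 0 < ε → ∀ (c a b : ℝ), Set.uIoc a b ⊆ Set.Icc (-z₀) z₀ →
      IntervalIntegrable (fun s => (ν s - c) * P ε s) volume a b := by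
    intro ε hε c a b hsub
    apply aux_II (C := (M + |c|) * ε⁻¹)
    · exact (((hmeas.sub measurable_const).mul
        ((hPcont hε).measurable)).aestronglyMeasurable)
    · intro s hs
      rw [norm_mul, Real.norm_eq_abs, Real.norm_eq_abs, abs_of_nonneg (hPnn hε s)]
      apply mul_le_mul _ (hPle hε s) (hPnn hε s) (by linarith [abs_nonneg c])
      calc |ν s - c| ≤ |ν s| + |c| := abs_sub _ _
        _ ≤ M + |c| := by linarith [hbound s (hsub hs)]
  -- the kernel mass tends to π
  have hK : Tendsto (fun ε : ℝ => ∫ s in (-z₀)..z₀, P ε s)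
      (nhdsWithin 0 (Set.Ioi 0)) (nhds π) := by
    have heq : ∀ ε ∈ Set.Ioi (0:ℝ), (∫ s in (-z₀)..z₀, P ε s)
        = arctan ((z₀ - x₀)/ε) + arctan ((z₀ + x₀)/ε) := by
      intro ε hε
      rw [aux_kernel x₀ hε]
      rw [show (-z₀ - x₀)/ε = -((z₀ + x₀)/ε) by ring, Real.arctan_neg]
      ring
    have h1 := (aux_arctan (sub_pos.2 hx₀.2)).add
      (aux_arctan (by linarith [hx₀.1] : (0:ℝ) < z₀ + x₀))
    rw [show π/2 + π/2 = π by ring] at h1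
    exact Tendsto.congr' (by filter_upwards [self_mem_nhdsWithin] with ε hε
      using (heq ε hε).symm) h1
  -- the deviation term tends to 0
  have hD : Tendsto (fun ε : ℝ => ∫ s in (-z₀)..z₀, (ν s - ν x₀) * P ε s)
      (nhdsWithin 0 (Set.Ioi 0)) (nhds 0) := by
    rw [NormedAddCommGroup.tendsto_nhds_zero]
    intro δ hδ
    set δ₁ : ℝ := δ / (2 * (π + 1)) with hδ₁
    have hδ₁pos : 0 < δ₁ := by
      have := Real.pi_pos; positivity
    obtain ⟨η₀, hη₀pos, hη₀⟩ := Metric.continuousAt_iff.1 hcont δ₁ hδ₁pos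
    set η : ℝ := min (η₀/2) (min (x₀ + z₀) (z₀ - x₀)) with hη
    have hηpos : 0 < η := by
      apply lt_min (by positivity) (lt_min (by linarith [hx₀.1]) (by linarith [hx₀.2]))
    have hη1 : η < η₀ := lt_of_le_of_lt (min_le_left _ _) (by linarith)
    have hη2 : -z₀ ≤ x₀ - η := by
      have := min_le_right (η₀/2) (min (x₀ + z₀) (z₀ - x₀))
      have := min_le_left (x₀ + z₀) (z₀ - x₀)
      have : η ≤ x₀ + z₀ := le_trans (min_le_right _ _) (min_le_left _ _)
      linarith
    have hη3 : x₀ + η ≤ z₀ := by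
      have : η ≤ z₀ - x₀ := le_trans (min_le_right _ _) (min_le_right _ _)
      linarith
    set M' : ℝ := M + |ν x₀| + 1 with hM'
    have hM'pos : 0 < M' := by
      have := le_trans (abs_nonneg (ν x₀)) (hbound x₀ ⟨hx₀.1.le, hx₀.2.le⟩)
      positivity
    have hb' : ∀ s ∈ Set.Icc (-z₀) z₀, |ν s - ν x₀| ≤ M' := by
      intro s hs
      calc |ν s - ν x₀| ≤ |ν s| + |ν x₀| := abs_sub _ _
        _ ≤ M' := by linarith [hbound s hs]
    set ε₁ : ℝ := δ * η^2 / (8 * M' * z₀) with hε₁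
    have hε₁pos : 0 < ε₁ := by positivity
    filter_upwards [Ioo_mem_nhdsGT_of_mem (Set.mem_Ico.2 ⟨le_refl 0, hε₁pos⟩)]
      with ε hε
    obtain ⟨hεpos, hεlt⟩ := hε
    rw [hε₁] at hεlt
    clear_value δ₁ η M' ε₁
    set g : ℝ → ℝ := fun s => (ν s - ν x₀) * P ε s with hg
    -- split the integral
    have hsub1 : Set.uIoc (-z₀) (x₀ - η) ⊆ Set.Icc (-z₀) z₀ := by
      rw [Set.uIoc_of_le (by linarith)]
      exact (Set.Ioc_subset_Icc_self).trans (Set.Icc_subset_Icc le_rfl (by linarith))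
    have hsub2 : Set.uIoc (x₀ - η) (x₀ + η) ⊆ Set.Icc (-z₀) z₀ := by
      rw [Set.uIoc_of_le (by linarith)]
      exact (Set.Ioc_subset_Icc_self).trans (Set.Icc_subset_Icc (by linarith) (by linarith))
    have hsub3 : Set.uIoc (x₀ + η) z₀ ⊆ Set.Icc (-z₀) z₀ := by
      rw [Set.uIoc_of_le (by linarith)]
      exact (Set.Ioc_subset_Icc_self).trans (Set.Icc_subset_Icc (by linarith) le_rfl)
    have hi1 := hInt hεpos (ν x₀) (-z₀) (x₀ - η) hsub1
    have hi2 := hInt hεpos (ν x₀) (x₀ - η) (x₀ + η) hsub2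
    have hi3 := hInt hεpos (ν x₀) (x₀ + η) z₀ hsub3
    have hsplit : (∫ s in (-z₀)..z₀, g s)
        = (∫ s in (-z₀)..(x₀ - η), g s) + (∫ s in (x₀ - η)..(x₀ + η), g s)
          + (∫ s in (x₀ + η)..z₀, g s) := by
      rw [intervalIntegral.integral_add_adjacent_intervals hi1 hi2,
        intervalIntegral.integral_add_adjacent_intervals (hi1.trans hi2) hi3]
    -- outer bounds
    have hout1 : |∫ s in (-z₀)..(x₀ - η), g s| ≤ M' * (ε/η^2) * (2*z₀) := by
      have h1 : ∀ s ∈ Set.uIoc (-z₀) (x₀ - η), ‖g s‖ ≤ M' * (ε/η^2) := by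
        intro s hs
        rw [Real.norm_eq_abs, hg, abs_mul, abs_of_nonneg (hPnn hεpos s)]
        have hs' := hsub1 hs
        have hsle : s ≤ x₀ - η := ((Set.uIoc_of_le (by linarith : -z₀ ≤ x₀ - η)) ▸ hs).2
        have hsq : η^2 ≤ (s - x₀)^2 := by nlinarith
        have hPb : P ε s ≤ ε/η^2 := by
          rw [hP]
          apply div_le_div_of_nonneg_left hεpos.le (by positivity)
          nlinarith [sq_nonneg ε]
        exact mul_le_mul (hb' s hs') hPb (hPnn hεpos s) hM'pos.le
      calc |∫ s in (-z₀)..(x₀ - η), g s| ≤ M' * (ε/η^2) * |(x₀ - η) - (-z₀)| :=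
            intervalIntegral.norm_integral_le_of_norm_le_const h1
        _ ≤ M' * (ε/η^2) * (2*z₀) := by
            apply mul_le_mul_of_nonneg_left _ (by positivity)
            rw [abs_of_nonneg (by linarith)]
            linarith [hx₀.2]
    have hout3 : |∫ s in (x₀ + η)..z₀, g s| ≤ M' * (ε/η^2) * (2*z₀) := by
      have h1 : ∀ s ∈ Set.uIoc (x₀ + η) z₀, ‖g s‖ ≤ M' * (ε/η^2) := by
        intro s hs
        rw [Real.norm_eq_abs, hg, abs_mul, abs_of_nonneg (hPnn hεpos s)]
        have hs' := hsub3 hs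
        have hsge : x₀ + η ≤ s := (le_of_lt ((Set.uIoc_of_le (by linarith : x₀ + η ≤ z₀)) ▸ hs).1)
        have hsq : η^2 ≤ (s - x₀)^2 := by nlinarith
        have hPb : P ε s ≤ ε/η^2 := by
          rw [hP]
          apply div_le_div_of_nonneg_left hεpos.le (by positivity)
          nlinarith [sq_nonneg ε]
        exact mul_le_mul (hb' s hs') hPb (hPnn hεpos s) hM'pos.le
      calc |∫ s in (x₀ + η)..z₀, g s| ≤ M' * (ε/η^2) * |z₀ - (x₀ + η)| :=
            intervalIntegral.norm_integral_le_of_norm_le_const h1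
        _ ≤ M' * (ε/η^2) * (2*z₀) := by
            apply mul_le_mul_of_nonneg_left _ (by positivity)
            rw [abs_of_nonneg (by linarith)]
            linarith [hx₀.1]
    -- middle bound
    have hmid : |∫ s in (x₀ - η)..(x₀ + η), g s| ≤ δ₁ * π := by
      have hab : x₀ - η ≤ x₀ + η := by linarith
      have hgb : ∀ s ∈ Set.Icc (x₀ - η) (x₀ + η), |g s| ≤ δ₁ * P ε s := by
        intro s hs
        rw [hg, abs_mul, abs_of_nonneg (hPnn hεpos s)]
        apply mul_le_mul_of_nonneg_right _ (hPnn hεpos s)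
        have hs1 : |s - x₀| ≤ η := abs_le.2 ⟨by linarith [hs.1], by linarith [hs.2]⟩
        have hd : dist s x₀ < η₀ := by rw [Real.dist_eq]; linarith
        have := hη₀ hd
        rw [Real.dist_eq] at this
        exact this.le
      have hintP : IntervalIntegrable (fun s => δ₁ * P ε s) volume (x₀ - η) (x₀ + η) :=
        ((continuous_const.mul (hPcont hεpos)).intervalIntegrable _ _)
      calc |∫ s in (x₀ - η)..(x₀ + η), g s| ≤ ∫ s in (x₀ - η)..(x₀ + η), |g s| :=
            intervalIntegral.abs_integral_le_integral_abs hab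
        _ ≤ ∫ s in (x₀ - η)..(x₀ + η), δ₁ * P ε s := by
            apply intervalIntegral.integral_mono_on hab hi2.abs hintP
            exact hgb
        _ = δ₁ * (arctan (η/ε) - arctan (-(η/ε))) := by
            rw [intervalIntegral.integral_const_mul, aux_kernel x₀ hεpos]
            congr 2
            · congr 1; ring
            · congr 1; ring
        _ ≤ δ₁ * π := by
            apply mul_le_mul_of_nonneg_left _ hδ₁pos.le
            rw [Real.arctan_neg]
            have h1 := Real.arctan_lt_pi_div_two (η/ε)
            linarith
    -- combine
    have hsum : |∫ s in (-z₀)..z₀, g s| ≤ 2 * (M' * (ε/η^2) * (2*z₀)) + δ₁ * π := by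
      rw [hsplit]
      have h3 := abs_add_le ((∫ s in (-z₀)..(x₀ - η), g s) + (∫ s in (x₀ - η)..(x₀ + η), g s))
        (∫ s in (x₀ + η)..z₀, g s)
      have h4 := abs_add_le (∫ s in (-z₀)..(x₀ - η), g s) (∫ s in (x₀ - η)..(x₀ + η), g s)
      linarith
    have hεlt' : ε < δ * η^2 / (8 * M' * z₀) := hεlt
    have hfirst : 2 * (M' * (ε/η^2) * (2*z₀)) < δ/2 := by
      rw [lt_div_iff₀ (by positivity : (0:ℝ) < 8 * M' * z₀)] at hεlt'
      have hδ2 : 2 * (M' * (ε/η^2) * (2*z₀)) = ε * (8 * M' * z₀) / (2 * η^2) := by ring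
      rw [hδ2, div_lt_iff₀ (by positivity : (0:ℝ) < 2 * η^2)]
      have hr : δ/2 * (2*η^2) = δ * η^2 := by ring
      linarith
    have hsecond : δ₁ * π < δ/2 := by
      have hπ := Real.pi_pos
      rw [hδ₁, div_mul_eq_mul_div, div_lt_div_iff₀ (by positivity) (by norm_num)]
      nlinarith
    rw [Real.norm_eq_abs]
    exact lt_of_le_of_lt hsum (by linarith)
  -- combine: F = D + ν x₀ * K
  have hcomb : ∀ ε ∈ Set.Ioi (0:ℝ),
      (∫ s in (-z₀)..z₀, ε * ν s / ((s - x₀)^2 + ε^2))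
        = (∫ s in (-z₀)..z₀, (ν s - ν x₀) * P ε s) + ν x₀ * ∫ s in (-z₀)..z₀, P ε s := by
    intro ε hε
    have hii : IntervalIntegrable (fun s => (ν s - ν x₀) * P ε s) volume (-z₀) z₀ := by
      apply hInt hε (ν x₀) (-z₀) z₀
      rw [Set.uIoc_of_le (by linarith)]
      exact Set.Ioc_subset_Icc_self
    have hjj : IntervalIntegrable (fun s => ν x₀ * P ε s) volume (-z₀) z₀ :=
      (continuous_const.mul (hPcont hε)).intervalIntegrable _ _
    rw [← intervalIntegral.integral_const_mul, ← intervalIntegral.integral_add hii hjj]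
    apply intervalIntegral.integral_congr
    intro s _
    rw [hP]
    ring
  have hfinal := hD.add (hK.const_mul (ν x₀))
  rw [zero_add] at hfinal
  rw [show ν x₀ * π = π * ν x₀ by ring] at hfinal
  apply Tendsto.congr' _ hfinal
  filter_upwards [self_mem_nhdsWithin] with ε hε
  exact (hcomb ε hε).symm

set_option maxHeartbeats 1000000 in
lemma aux_key (z₀ M : ℝ) (hz₀ : 0 < z₀) (ν : ℝ → ℝ) (hmeas : Measurable ν)
    (hbound : ∀ s ∈ Set.Icc (-z₀) z₀, |ν s| ≤ M)
    (x₀ : ℝ) (hx₀ : x₀ ∈ Set.Ioo (-z₀) z₀) {ε : ℝ} (hε : 0 < ε) :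
    Complex.exp (Complex.I *
        ∫ s in (-z₀)..z₀, (ν s : ℂ) / ((s : ℂ) - ((x₀ : ℂ) + (ε : ℂ) * Complex.I))) /
      Complex.exp (Complex.I *
        ∫ s in (-z₀)..z₀, (ν s : ℂ) / ((s : ℂ) - ((x₀ : ℂ) - (ε : ℂ) * Complex.I)))
    = ((Real.exp (-(2 * ∫ s in (-z₀)..z₀, ε * ν s / ((s - x₀)^2 + ε^2))) : ℝ) : ℂ) := by
  have hM0 : 0 ≤ M := le_trans (abs_nonneg _) (hbound x₀ ⟨hx₀.1.le, hx₀.2.le⟩)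
  -- integrability of the Cauchy-type integrand for z off the real axis
  have hint : ∀ z : ℂ, z.im ≠ 0 →
      IntervalIntegrable (fun s : ℝ => (ν s : ℂ) / ((s : ℂ) - z)) volume (-z₀) z₀ := by
    intro z hz
    apply aux_II (C := M / |z.im|)
    · exact ((Complex.measurable_ofReal.comp hmeas).div
        (Complex.measurable_ofReal.sub measurable_const)).aestronglyMeasurable
    · intro s hs
      have hs' : s ∈ Set.Icc (-z₀) z₀ := by
        rw [Set.uIoc_of_le (by linarith)] at hs
        exact Set.Ioc_subset_Icc_self hs
      rw [norm_div]
      have h1 : ‖((ν s : ℝ) : ℂ)‖ ≤ M := by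
        rw [Complex.norm_real, Real.norm_eq_abs]
        exact hbound s hs'
      have h2 : |z.im| ≤ ‖(s : ℂ) - z‖ := by
        have h3 := Complex.abs_im_le_norm ((s : ℂ) - z)
        rw [Complex.sub_im, Complex.ofReal_im, zero_sub, abs_neg] at h3
        exact h3
      exact div_le_div₀ hM0 h1 (abs_pos.2 hz) h2
  have himp : ((x₀ : ℂ) + (ε : ℂ) * Complex.I).im ≠ 0 := by
    simp [hε.ne']
  have himm : ((x₀ : ℂ) - (ε : ℂ) * Complex.I).im ≠ 0 := by
    simp [hε.ne']
  have hnep : ∀ s : ℝ, (s : ℂ) - ((x₀ : ℂ) + (ε : ℂ) * Complex.I) ≠ 0 := by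
    intro s h
    have := congrArg Complex.im h
    simp at this
    exact hε.ne' this
  have hnem : ∀ s : ℝ, (s : ℂ) - ((x₀ : ℂ) - (ε : ℂ) * Complex.I) ≠ 0 := by
    intro s h
    have := congrArg Complex.im h
    simp at this
    exact hε.ne' this
  rw [← Complex.exp_sub, ← mul_sub,
    ← intervalIntegral.integral_sub (hint _ himp) (hint _ himm),
    ← intervalIntegral.integral_const_mul]
  have hpt : ∀ s : ℝ,
      Complex.I * ((ν s : ℂ) / ((s : ℂ) - ((x₀ : ℂ) + (ε : ℂ) * Complex.I))
          - (ν s : ℂ) / ((s : ℂ) - ((x₀ : ℂ) - (ε : ℂ) * Complex.I)))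
        = ((-(2 * (ε * ν s / ((s - x₀)^2 + ε^2))) : ℝ) : ℂ) := by
    intro s
    have h1 := hnep s
    have h2 := hnem s
    have h3 : ((s - x₀)^2 + ε^2 : ℝ) ≠ 0 := by positivity
    have h3c : ((s : ℂ) - (x₀ : ℂ))^2 + (ε : ℂ)^2 ≠ 0 := by
      intro h
      apply h3
      have : ((((s - x₀)^2 + ε^2 : ℝ)) : ℂ) = 0 := by push_cast; linear_combination h
      exact_mod_cast this
    push_cast
    have hprod : ((s : ℂ) - ((x₀ : ℂ) + (ε : ℂ) * Complex.I)) * ((s : ℂ) - ((x₀ : ℂ) - (ε : ℂ) * Complex.I)) = ((s : ℂ) - (x₀ : ℂ))^2 + (ε : ℂ)^2 := by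
      ring_nf; rw [Complex.I_sq]; ring
    rw [div_sub_div _ _ h1 h2, hprod]
    field_simp [h3c]
    ring_nf
    rw [Complex.I_sq]
    ring
  rw [intervalIntegral.integral_congr
    (g := fun s : ℝ => ((-(2 * (ε * ν s / ((s - x₀)^2 + ε^2))) : ℝ) : ℂ)) (fun s _ => hpt s)]
  rw [intervalIntegral.integral_ofReal, ← Complex.ofReal_exp]
  congr 2
  rw [intervalIntegral.integral_neg, intervalIntegral.integral_const_mul]

/-- Boundary-value jump of `δ(z) = exp( i ∫_{−z₀}^{z₀} ν(s)/(s−z) ds )` across the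
segment: if `ν` is bounded measurable on `[−z₀, z₀]` and continuous at
`x₀ ∈ (−z₀, z₀)`, then `lim_{ε→0⁺} δ(x₀+iε)/δ(x₀−iε) = e^{−2πν(x₀)}`.  In particular,
if `ν(s) = −(1/2π) log(1+|r(s)|²)`, the limit equals `1 + |r(x₀)|²`. -/
theorem stmt_8 (z₀ M : ℝ) (hz₀ : 0 < z₀) (ν : ℝ → ℝ) (hmeas : Measurable ν)
    (hbound : ∀ s ∈ Set.Icc (-z₀) z₀, |ν s| ≤ M)
    (x₀ : ℝ) (hx₀ : x₀ ∈ Set.Ioo (-z₀) z₀) (hcont : ContinuousAt ν x₀) :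
    Tendsto
        (fun ε : ℝ =>
          Complex.exp (Complex.I *
              ∫ s in (-z₀)..z₀, (ν s : ℂ) / ((s : ℂ) - ((x₀ : ℂ) + (ε : ℂ) * Complex.I))) /
            Complex.exp (Complex.I *
              ∫ s in (-z₀)..z₀, (ν s : ℂ) / ((s : ℂ) - ((x₀ : ℂ) - (ε : ℂ) * Complex.I))))
        (nhdsWithin 0 (Set.Ioi 0))
        (nhds ((Real.exp (-(2 * Real.pi * ν x₀)) : ℝ) : ℂ)) ∧
      ∀ r : ℝ → ℂ,
        (∀ s : ℝ, ν s = -(1 / (2 * Real.pi)) * Real.log (1 + ‖r s‖ ^ 2)) →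
        Tendsto
          (fun ε : ℝ =>
            Complex.exp (Complex.I *
                ∫ s in (-z₀)..z₀, (ν s : ℂ) / ((s : ℂ) - ((x₀ : ℂ) + (ε : ℂ) * Complex.I))) /
              Complex.exp (Complex.I *
                ∫ s in (-z₀)..z₀, (ν s : ℂ) / ((s : ℂ) - ((x₀ : ℂ) - (ε : ℂ) * Complex.I))))
          (nhdsWithin 0 (Set.Ioi 0))
          (nhds ((1 + ‖r x₀‖ ^ 2 : ℝ) : ℂ)) := by
  have hF := aux_poisson z₀ M hz₀ ν hmeas hbound x₀ hx₀ hcont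
  have h2 : Tendsto (fun ε : ℝ => -(2 * ∫ s in (-z₀)..z₀, ε * ν s / ((s - x₀)^2 + ε^2)))
      (nhdsWithin 0 (Set.Ioi 0)) (nhds (-(2 * (π * ν x₀)))) := (hF.const_mul 2).neg
  have h3 : Tendsto
      (fun ε : ℝ => ((Real.exp (-(2 * ∫ s in (-z₀)..z₀, ε * ν s / ((s - x₀)^2 + ε^2))) : ℝ) : ℂ))
      (nhdsWithin 0 (Set.Ioi 0)) (nhds ((Real.exp (-(2 * (π * ν x₀))) : ℝ) : ℂ)) :=
    (Complex.continuous_ofReal.tendsto _).comp ((Real.continuous_exp.tendsto _).comp h2)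
  have hmain : Tendsto
      (fun ε : ℝ =>
        Complex.exp (Complex.I *
            ∫ s in (-z₀)..z₀, (ν s : ℂ) / ((s : ℂ) - ((x₀ : ℂ) + (ε : ℂ) * Complex.I))) /
          Complex.exp (Complex.I *
            ∫ s in (-z₀)..z₀, (ν s : ℂ) / ((s : ℂ) - ((x₀ : ℂ) - (ε : ℂ) * Complex.I))))
      (nhdsWithin 0 (Set.Ioi 0)) (nhds ((Real.exp (-(2 * Real.pi * ν x₀)) : ℝ) : ℂ)) := by
    rw [show -(2 * Real.pi * ν x₀) = -(2 * (π * ν x₀)) by ring]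
    apply Tendsto.congr' _ h3
    filter_upwards [self_mem_nhdsWithin] with ε hε
    exact (aux_key z₀ M hz₀ ν hmeas hbound x₀ hx₀ hε).symm
  refine ⟨hmain, fun r hr => ?_⟩
  have hpos : (0:ℝ) < 1 + ‖r x₀‖ ^ 2 := by positivity
  have hval : Real.exp (-(2 * Real.pi * ν x₀)) = 1 + ‖r x₀‖ ^ 2 := by
    rw [hr x₀]
    rw [show -(2 * Real.pi * (-(1 / (2 * Real.pi)) * Real.log (1 + ‖r x₀‖ ^ 2)))
        = Real.log (1 + ‖r x₀‖ ^ 2) by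
      field_simp]
    exact Real.exp_log hpos
  rw [← hval]
  exact hmain
end

section
/- Let z₀ > 0, let ν : ℝ → ℝ be measurable and bounded on [−z₀, z₀], and let z₁, …, z_N be complex numbers with Im z_k > 0. Define T(z) = ( ∏_{k=1}^N (z − z̄_k)/(z − z_k) ) · exp( i ∫_{−z₀}^{z₀} ν(s)/(s−z) ds ). Then there exist constants C > 0 and R > 0 such that for all complex z with |z| ≥ R, | T(z) − 1 − (i/z)·( 2 ∑_{k=1}^N Im z_k − ∫_{−z₀}^{z₀} ν(s) ds ) | ≤ C / |z|². -/
open MeasureTheory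

lemma combine_expand (z A B α β : ℂ) (cA cB KA KB LB : ℝ) (hz : 1 ≤ ‖z‖)
    (hA : ‖(A - 1 - α / z)‖ ≤ cA / ‖z‖ ^ 2)
    (hB : ‖(B - 1 - β / z)‖ ≤ cB / ‖z‖ ^ 2)
    (hα : ‖α‖ ≤ KA) (hβ : ‖β‖ ≤ KB)
    (hBb : ‖B‖ ≤ LB) (hLB : 0 ≤ LB) :
    ‖(A * B - 1 - (α + β) / z)‖ ≤
      (cA * LB + (1 + KA) * cB + KA * KB) / ‖z‖ ^ 2 := by
  have hz0 : z ≠ 0 := by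
    intro h; rw [h] at hz; simp at hz; linarith
  have h0 : (0:ℝ) < ‖z‖ := lt_of_lt_of_le one_pos hz
  have hz2 : (0:ℝ) < ‖z‖ ^ 2 := by positivity
  have hKA : 0 ≤ KA := le_trans (norm_nonneg _) hα
  have hKB : 0 ≤ KB := le_trans (norm_nonneg _) hβ
  have hcA : 0 ≤ cA := by
    by_contra hn; push_neg at hn
    have : cA / ‖z‖ ^ 2 < 0 := div_neg_of_neg_of_pos hn hz2
    linarith [norm_nonneg (A - 1 - α / z)]
  have hcB : 0 ≤ cB := by
    by_contra hn; push_neg at hn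
    have : cB / ‖z‖ ^ 2 < 0 := div_neg_of_neg_of_pos hn hz2
    linarith [norm_nonneg (B - 1 - β / z)]
  have key : A * B - 1 - (α + β) / z
      = (A - 1 - α / z) * B + (1 + α / z) * (B - 1 - β / z) + (α / z) * (β / z) := by
    field_simp
    ring
  have h1 : ‖((A - 1 - α / z) * B)‖ ≤ (cA * LB) / ‖z‖ ^ 2 := by
    rw [norm_mul]
    calc ‖(A - 1 - α / z)‖ * ‖B‖
        ≤ (cA / ‖z‖ ^ 2) * LB :=
          mul_le_mul hA hBb (norm_nonneg _) (by positivity)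
      _ = (cA * LB) / ‖z‖ ^ 2 := by ring
  have hb1 : ‖(1 + α / z)‖ ≤ 1 + KA := by
    calc ‖(1 + α / z)‖ ≤ ‖1‖ + ‖(α / z)‖ :=
          norm_add_le _ _
      _ ≤ 1 + KA := by
          rw [norm_one, norm_div]
          have : ‖α‖ / ‖z‖ ≤ KA := by
            rw [div_le_iff₀ h0]; nlinarith
          linarith
  have h2 : ‖((1 + α / z) * (B - 1 - β / z))‖ ≤ ((1 + KA) * cB) / ‖z‖ ^ 2 := by
    rw [norm_mul]
    calc ‖(1 + α / z)‖ * ‖(B - 1 - β / z)‖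
        ≤ (1 + KA) * (cB / ‖z‖ ^ 2) :=
          mul_le_mul hb1 hB (norm_nonneg _) (by linarith)
      _ = ((1 + KA) * cB) / ‖z‖ ^ 2 := by ring
  have h3 : ‖((α / z) * (β / z))‖ ≤ (KA * KB) / ‖z‖ ^ 2 := by
    rw [norm_mul, norm_div, norm_div, div_mul_div_comm, ← sq]
    gcongr
  have t1 := norm_add_le ((A - 1 - α / z) * B + (1 + α / z) * (B - 1 - β / z))
      ((α / z) * (β / z))
  have t2 := norm_add_le ((A - 1 - α / z) * B) ((1 + α / z) * (B - 1 - β / z))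
  have hr : (cA * LB + (1 + KA) * cB + KA * KB) / ‖z‖ ^ 2
      = (cA * LB) / ‖z‖ ^ 2 + ((1 + KA) * cB) / ‖z‖ ^ 2
        + (KA * KB) / ‖z‖ ^ 2 := by ring
  rw [key, hr]
  linarith

lemma prod_expand {ι : Type*} (s : Finset ι) (R c K : ℝ) (hR : 1 ≤ R) (hc : 0 ≤ c) (hK : 1 ≤ K)
    (F : ι → ℂ → ℂ) (α : ι → ℂ)
    (h1 : ∀ k ∈ s, ∀ z : ℂ, R ≤ ‖z‖ →
        ‖(F k z - 1 - α k / z)‖ ≤ c / ‖z‖ ^ 2)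
    (h2 : ∀ k ∈ s, ∀ z : ℂ, R ≤ ‖z‖ → ‖(F k z)‖ ≤ K)
    (h3 : ∀ k ∈ s, ‖(α k)‖ ≤ K) :
    ∃ C, 0 ≤ C ∧ ∃ L, 1 ≤ L ∧ ∃ S, 0 ≤ S ∧ ‖(∑ k ∈ s, α k)‖ ≤ S ∧
      ∀ z : ℂ, R ≤ ‖z‖ →
        ‖((∏ k ∈ s, F k z) - 1 - (∑ k ∈ s, α k) / z)‖ ≤ C / ‖z‖ ^ 2 ∧
        ‖(∏ k ∈ s, F k z)‖ ≤ L := by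
  classical
  induction s using Finset.induction_on with
  | empty =>
    refine ⟨0, le_refl _, 1, le_refl _, 0, le_refl _, by simp, fun z hz => ?_⟩
    simp
  | insert a s' hk ih =>
    obtain ⟨C, hC, L, hL, S, hS, hSa, hIH⟩ := ih
      (fun k hks => h1 k (Finset.mem_insert_of_mem hks))
      (fun k hks => h2 k (Finset.mem_insert_of_mem hks))
      (fun k hks => h3 k (Finset.mem_insert_of_mem hks))
    have hKa := h3 a (Finset.mem_insert_self a s')
    refine ⟨c * L + (1 + K) * C + K * S, by positivity, K * L, by nlinarith, K + S,
      by linarith, ?_, fun z hz => ?_⟩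
    · rw [Finset.sum_insert hk]
      exact le_trans (norm_add_le _ _) (by linarith)
    · have hz1 : 1 ≤ ‖z‖ := le_trans hR hz
      obtain ⟨ihb, ihL⟩ := hIH z hz
      constructor
      · rw [Finset.prod_insert hk, Finset.sum_insert hk]
        exact combine_expand z (F a z) (∏ k ∈ s', F k z) (α a) (∑ k ∈ s', α k)
          c C K S L hz1 (h1 a (Finset.mem_insert_self a s') z hz) ihb hKa hSa ihL
          (by linarith)
      · rw [Finset.prod_insert hk, norm_mul]
        exact mul_le_mul (h2 a (Finset.mem_insert_self a s') z hz) ihL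
          (norm_nonneg _) (by linarith)

lemma factor_expand (w z : ℂ) (B : ℝ) (hw : ‖w‖ ≤ B) (hB : 1 ≤ B)
    (him : 0 < w.im) (hz : 2 * B ≤ ‖z‖) :
    ‖((z - (starRingEnd ℂ) w) / (z - w) - 1 -
        (((2 * w.im : ℝ) : ℂ) * Complex.I) / z)‖ ≤ (4 * B ^ 2) / ‖z‖ ^ 2 ∧
    ‖((z - (starRingEnd ℂ) w) / (z - w))‖ ≤ 1 + 4 * B := by
  have hz1 : (1:ℝ) ≤ ‖z‖ := by linarith
  have hzpos : (0:ℝ) < ‖z‖ := by linarith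
  have hzw : ‖z‖ / 2 ≤ ‖(z - w)‖ := by
    have h := norm_sub_norm_le z w
    linarith
  have hzwpos : (0:ℝ) < ‖(z - w)‖ := by linarith
  have hzwne : z - w ≠ 0 := by
    intro h; rw [h] at hzwpos; simp at hzwpos
  have hzne : z ≠ 0 := by
    intro h; rw [h] at hzpos; simp at hzpos
  have hα : (((2 * w.im : ℝ) : ℂ) * Complex.I) = w - (starRingEnd ℂ) w :=
    (Complex.sub_conj w).symm
  have himB : w.im ≤ B := le_trans (le_trans (le_abs_self _) (Complex.abs_im_le_norm w)) hw
  constructor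
  · have key : (z - (starRingEnd ℂ) w) / (z - w) - 1 - (((2 * w.im : ℝ) : ℂ) * Complex.I) / z
        = ((w - (starRingEnd ℂ) w) * w) / ((z - w) * z) := by
      rw [hα]; field_simp; ring
    rw [key, norm_div, norm_mul, norm_mul]
    have habs : ‖(w - (starRingEnd ℂ) w)‖ = 2 * w.im := by
      rw [← hα, norm_mul, Complex.norm_I, mul_one, Complex.norm_real, Real.norm_eq_abs]
      rw [abs_of_pos (by linarith)]
    rw [habs]
    rw [div_le_div_iff₀ (by positivity) (by positivity)]
    nlinarith [mul_le_mul himB hw (norm_nonneg w) (by linarith : (0:ℝ) ≤ B),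
      mul_le_mul_of_nonneg_right hzw (le_of_lt hzpos), sq_nonneg (‖z‖),
      mul_pos hzpos hzpos]
  · rw [norm_div, div_le_iff₀ hzwpos]
    have h1 : ‖(z - (starRingEnd ℂ) w)‖ ≤ ‖z‖ + B := by
      calc ‖(z - (starRingEnd ℂ) w)‖
          ≤ ‖z‖ + ‖((starRingEnd ℂ) w)‖ := norm_sub_le _ _
        _ ≤ ‖z‖ + B := by rw [Complex.norm_conj]; linarith
    nlinarith

lemma exp_expand (z₀ M : ℝ) (hz₀ : 0 < z₀) (hM : 0 ≤ M) (ν : ℝ → ℝ) (hmeas : Measurable ν)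
    (hbound : ∀ s ∈ Set.Icc (-z₀) z₀, |ν s| ≤ M) (z : ℂ)
    (h1 : 1 ≤ ‖z‖) (h2z : 2 * z₀ ≤ ‖z‖)
    (h4M : 4 * z₀ * M ≤ ‖z‖) :
    ‖(Complex.exp (Complex.I * ∫ s in (-z₀)..z₀, (ν s : ℂ) / ((s : ℂ) - z)) - 1 -
        (-(Complex.I * ((∫ s in (-z₀)..z₀, ν s : ℝ) : ℂ))) / z)‖ ≤
      (16 * z₀ ^ 2 * M ^ 2 + 4 * M * z₀ ^ 2) / ‖z‖ ^ 2 ∧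
    ‖(Complex.exp (Complex.I * ∫ s in (-z₀)..z₀, (ν s : ℂ) / ((s : ℂ) - z)))‖ ≤ 3 := by
  have hzpos : (0:ℝ) < ‖z‖ := by linarith
  have hzne : z ≠ 0 := by intro h; rw [h] at hzpos; simp at hzpos
  set J : ℂ := ∫ s in (-z₀)..z₀, (ν s : ℂ) / ((s : ℂ) - z) with hJ
  set b : ℝ := ∫ s in (-z₀)..z₀, ν s with hb
  -- distance from z to the segment
  have hsz : ∀ s : ℝ, s ∈ Set.Icc (-z₀) z₀ → ‖z‖ / 2 ≤ ‖((s:ℂ) - z)‖ := by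
    intro s hs
    have h := norm_sub_norm_le ((s:ℂ)) z
    have hsabs : ‖(s:ℂ)‖ ≤ z₀ := by
      rw [Complex.norm_real, Real.norm_eq_abs]
      rw [abs_le]; exact ⟨hs.1, hs.2⟩
    have h' := norm_sub_norm_le z ((s:ℂ))
    rw [norm_sub_rev]
    linarith
  have hszne : ∀ s : ℝ, s ∈ Set.Icc (-z₀) z₀ → (s:ℂ) - z ≠ 0 := by
    intro s hs h
    have := hsz s hs
    rw [h] at this; simp at this; linarith
  -- pointwise bound
  have hptb : ∀ s ∈ Set.Icc (-z₀) z₀,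
      ‖(ν s : ℂ) / ((s : ℂ) - z)‖ ≤ 2 * M / ‖z‖ := by
    intro s hs
    have hd := hsz s hs
    have hdpos : (0:ℝ) < ‖((s:ℂ) - z)‖ := by linarith
    rw [norm_div, Complex.norm_real, Real.norm_eq_abs]
    rw [div_le_div_iff₀ hdpos hzpos]
    nlinarith [hbound s hs, abs_nonneg (ν s)]
  -- integrability
  have hmeasC : Measurable (fun s : ℝ => (ν s : ℂ)) := Complex.measurable_ofReal.comp hmeas
  have hint1 : IntervalIntegrable (fun s : ℝ => (ν s : ℂ) / ((s : ℂ) - z)) volume (-z₀) z₀ := by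
    rw [intervalIntegrable_iff]
    apply Measure.integrableOn_of_bounded (M := 2 * M / ‖z‖)
    · exact measure_Ioc_lt_top.ne
    · exact (hmeasC.div ((Complex.measurable_ofReal.sub measurable_const))).aestronglyMeasurable
    · apply (ae_restrict_iff' measurableSet_uIoc).2 (ae_of_all _ ?_)
      intro s hs
      have hs' : s ∈ Set.Icc (-z₀) z₀ := by
        rw [Set.uIoc_of_le (by linarith : -z₀ ≤ z₀)] at hs
        exact Set.Ioc_subset_Icc_self hs
      exact hptb s hs'
  have hintν : IntervalIntegrable (fun s : ℝ => (ν s : ℂ)) volume (-z₀) z₀ := by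
    rw [intervalIntegrable_iff]
    apply Measure.integrableOn_of_bounded (M := M)
    · exact measure_Ioc_lt_top.ne
    · exact hmeasC.aestronglyMeasurable
    · apply (ae_restrict_iff' measurableSet_uIoc).2 (ae_of_all _ ?_)
      intro s hs
      have hs' : s ∈ Set.Icc (-z₀) z₀ := by
        rw [Set.uIoc_of_le (by linarith : -z₀ ≤ z₀)] at hs
        exact Set.Ioc_subset_Icc_self hs
      rw [Complex.norm_real, Real.norm_eq_abs]
      exact hbound s hs'
  have hint2 : IntervalIntegrable (fun s : ℝ => (ν s : ℂ) / z) volume (-z₀) z₀ :=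
    hintν.div_const z
  have hofReal : (∫ s in (-z₀)..z₀, (ν s : ℂ)) = ((b : ℝ) : ℂ) :=
    intervalIntegral.integral_ofReal
  have hsplit : J + (b:ℂ)/z
      = ∫ s in (-z₀)..z₀, ((ν s : ℂ) / ((s:ℂ) - z) + (ν s : ℂ) / z) := by
    rw [intervalIntegral.integral_add hint1 hint2, intervalIntegral.integral_div, hofReal]
  have hcongr : (∫ s in (-z₀)..z₀, ((ν s : ℂ) / ((s:ℂ) - z) + (ν s : ℂ) / z))
      = ∫ s in (-z₀)..z₀, (ν s : ℂ) * (s:ℂ) / (((s:ℂ) - z) * z) := by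
    apply intervalIntegral.integral_congr
    intro s hs
    have hs' : s ∈ Set.Icc (-z₀) z₀ := by
      rwa [Set.uIcc_of_le (by linarith : -z₀ ≤ z₀)] at hs
    have h0 := hszne s hs'
    field_simp
    ring
  have hJb : ‖(J + (b:ℂ)/z)‖ ≤ 4 * M * z₀ ^ 2 / ‖z‖ ^ 2 := by
    rw [hsplit, hcongr]
    have hbd := intervalIntegral.norm_integral_le_of_norm_le_const
      (C := 2 * M * z₀ / ‖z‖ ^ 2)
      (f := fun s : ℝ => (ν s : ℂ) * (s:ℂ) / (((s:ℂ) - z) * z)) (a := -z₀) (b := z₀) ?_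
    · have habs2 : |z₀ - -z₀| = 2 * z₀ := by rw [abs_of_pos (by linarith)]; ring
      rw [habs2] at hbd
      calc ‖(∫ s in (-z₀)..z₀, (ν s : ℂ) * (s:ℂ) / (((s:ℂ) - z) * z))‖
          ≤ 2 * M * z₀ / ‖z‖ ^ 2 * (2 * z₀) := hbd
        _ = 4 * M * z₀ ^ 2 / ‖z‖ ^ 2 := by ring
    · intro s hs
      have hs' : s ∈ Set.Icc (-z₀) z₀ := by
        rw [Set.uIoc_of_le (by linarith : -z₀ ≤ z₀)] at hs
        exact Set.Ioc_subset_Icc_self hs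
      have hd := hsz s hs'
      have hdpos : (0:ℝ) < ‖((s:ℂ) - z)‖ := by linarith
      rw [norm_div, norm_mul, norm_mul, Complex.norm_real, Real.norm_eq_abs,
        Complex.norm_real, Real.norm_eq_abs]
      rw [div_le_div_iff₀ (by positivity) (by positivity)]
      have hsabs : |s| ≤ z₀ := by rw [abs_le]; exact ⟨hs'.1, hs'.2⟩
      have k1 : |ν s| * |s| * ‖z‖ ^ 2 ≤ M * z₀ * ‖z‖ ^ 2 :=
        mul_le_mul_of_nonneg_right
          (mul_le_mul (hbound s hs') hsabs (abs_nonneg s) hM) (sq_nonneg _)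
      have k2 : (2 * M * z₀) * (‖z‖ / 2 * ‖z‖)
          ≤ (2 * M * z₀) * (‖((s:ℂ) - z)‖ * ‖z‖) :=
        mul_le_mul_of_nonneg_left
          (mul_le_mul_of_nonneg_right hd (le_of_lt hzpos)) (by positivity)
      nlinarith [k1, k2]
  have hJle : ‖J‖ ≤ 4 * z₀ * M / ‖z‖ := by
    rw [hJ]
    have hbd := intervalIntegral.norm_integral_le_of_norm_le_const
      (C := 2 * M / ‖z‖)
      (f := fun s : ℝ => (ν s : ℂ) / ((s:ℂ) - z)) (a := -z₀) (b := z₀) ?_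
    · have habs2 : |z₀ - -z₀| = 2 * z₀ := by rw [abs_of_pos (by linarith)]; ring
      rw [habs2] at hbd
      calc ‖(∫ s in (-z₀)..z₀, (ν s : ℂ) / ((s:ℂ) - z))‖
          ≤ 2 * M / ‖z‖ * (2 * z₀) := hbd
        _ = 4 * z₀ * M / ‖z‖ := by ring
    · intro s hs
      have hs' : s ∈ Set.Icc (-z₀) z₀ := by
        rw [Set.uIoc_of_le (by linarith : -z₀ ≤ z₀)] at hs
        exact Set.Ioc_subset_Icc_self hs
      exact hptb s hs'
  have hJ1 : ‖J‖ ≤ 1 := by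
    refine le_trans hJle ?_
    rw [div_le_one hzpos]; linarith
  have hIJ : ‖(Complex.I * J)‖ = ‖J‖ := by
    rw [norm_mul, Complex.norm_I, one_mul]
  constructor
  · have hexp1 : ‖(Complex.exp (Complex.I * J) - 1 - Complex.I * J)‖
        ≤ ‖J‖ ^ 2 := by
      have h := Complex.norm_exp_sub_one_sub_id_le (x := Complex.I * J) (by rw [hIJ]; exact hJ1)
      rwa [hIJ] at h
    have hJsq : ‖J‖ ^ 2 ≤ 16 * z₀ ^ 2 * M ^ 2 / ‖z‖ ^ 2 := by
      have h := pow_le_pow_left₀ (norm_nonneg J) hJle 2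
      calc ‖J‖ ^ 2 ≤ (4 * z₀ * M / ‖z‖) ^ 2 := h
        _ = 16 * z₀ ^ 2 * M ^ 2 / ‖z‖ ^ 2 := by rw [div_pow]; ring_nf
    have hlin : Complex.I * J - (-(Complex.I * ((b:ℝ):ℂ))) / z
        = Complex.I * (J + ((b:ℝ):ℂ) / z) := by ring
    have hlinb : ‖(Complex.I * J - (-(Complex.I * ((b:ℝ):ℂ))) / z)‖
        ≤ 4 * M * z₀ ^ 2 / ‖z‖ ^ 2 := by
      rw [hlin, norm_mul, Complex.norm_I, one_mul]
      exact hJb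
    have hdecomp : Complex.exp (Complex.I * J) - 1 - (-(Complex.I * ((b:ℝ):ℂ))) / z
        = (Complex.exp (Complex.I * J) - 1 - Complex.I * J)
          + (Complex.I * J - (-(Complex.I * ((b:ℝ):ℂ))) / z) := by ring
    rw [hdecomp]
    calc ‖_‖ ≤ ‖(Complex.exp (Complex.I * J) - 1 - Complex.I * J)‖
          + ‖(Complex.I * J - (-(Complex.I * ((b:ℝ):ℂ))) / z)‖ :=
        norm_add_le _ _
      _ ≤ 16 * z₀ ^ 2 * M ^ 2 / ‖z‖ ^ 2 + 4 * M * z₀ ^ 2 / ‖z‖ ^ 2 := by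
          linarith [le_trans hexp1 hJsq]
      _ = (16 * z₀ ^ 2 * M ^ 2 + 4 * M * z₀ ^ 2) / ‖z‖ ^ 2 := by ring
  · rw [Complex.norm_exp]
    have hre : (Complex.I * J).re ≤ 1 := by
      refine le_trans (Complex.re_le_norm _) ?_
      rw [hIJ]; exact hJ1
    calc Real.exp (Complex.I * J).re ≤ Real.exp 1 := Real.exp_le_exp.2 hre
      _ ≤ 3 := by linarith [Real.exp_one_lt_d9]

/-- Large-`z` expansion of the conjugating function
`T(z) = ( ∏_{k=1}^N (z − z̄_k)/(z − z_k) ) · exp( i ∫_{−z₀}^{z₀} ν(s)/(s−z) ds )`: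
there are `C > 0`, `R > 0` with
`| T(z) − 1 − (i/z)(2 ∑ Im z_k − ∫_{−z₀}^{z₀} ν) | ≤ C/|z|²` whenever `|z| ≥ R`. -/
theorem stmt_10 (z₀ : ℝ) (hz₀ : 0 < z₀) (ν : ℝ → ℝ) (hmeas : Measurable ν)
    (M : ℝ) (hbound : ∀ s ∈ Set.Icc (-z₀) z₀, |ν s| ≤ M)
    (N : ℕ) (zk : Fin N → ℂ) (hzk : ∀ k, 0 < (zk k).im) :
    ∃ C > (0 : ℝ), ∃ R > (0 : ℝ), ∀ z : ℂ, R ≤ ‖z‖ →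
      ‖(∏ k, (z - (starRingEnd ℂ) (zk k)) / (z - zk k)) *
              Complex.exp (Complex.I * ∫ s in (-z₀)..z₀, (ν s : ℂ) / ((s : ℂ) - z)) -
            1 -
            Complex.I / z *
              ((2 * (∑ k, (zk k).im) - ∫ s in (-z₀)..z₀, ν s : ℝ) : ℂ)‖ ≤
        C / ‖z‖ ^ 2 := by
  have hM0 : 0 ≤ M := le_trans (abs_nonneg (ν 0)) (hbound 0 ⟨by linarith, by linarith⟩)
  set B : ℝ := (∑ k, ‖(zk k)‖) + 1 with hBdef
  have hB1 : 1 ≤ B := by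
    have : 0 ≤ ∑ k, ‖(zk k)‖ :=
      Finset.sum_nonneg fun k _ => norm_nonneg _
    simp only [hBdef]; linarith
  have hwB : ∀ k, ‖(zk k)‖ ≤ B := by
    intro k
    have := Finset.single_le_sum (f := fun k => ‖(zk k)‖)
      (fun k _ => norm_nonneg _) (Finset.mem_univ k)
    simp only [hBdef]; linarith
  set R : ℝ := max (max 1 (2 * z₀)) (max (2 * B) (4 * z₀ * M + 1)) with hRdef
  have hR1 : 1 ≤ R := le_trans (le_max_left 1 (2 * z₀)) (le_max_left _ _)
  -- product expansion
  obtain ⟨C, hC, L, hL, S, hS, hSa, hProd⟩ :=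
    prod_expand (Finset.univ : Finset (Fin N)) R (4 * B ^ 2) (1 + 4 * B) hR1
      (by positivity) (by linarith)
      (fun k z => (z - (starRingEnd ℂ) (zk k)) / (z - zk k))
      (fun k => ((2 * (zk k).im : ℝ) : ℂ) * Complex.I)
      (fun k _ z hz => (factor_expand (zk k) z B (hwB k) hB1 (hzk k)
        (le_trans (le_trans (le_max_left _ _) (le_max_right _ _)) hz)).1)
      (fun k _ z hz => (factor_expand (zk k) z B (hwB k) hB1 (hzk k)
        (le_trans (le_trans (le_max_left _ _) (le_max_right _ _)) hz)).2)
      (fun k _ => by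
        rw [norm_mul, Complex.norm_I, mul_one, Complex.norm_real, Real.norm_eq_abs,
          abs_of_pos (by linarith [hzk k])]
        have h := le_trans (le_trans (le_abs_self _) (Complex.abs_im_le_norm (zk k))) (hwB k)
        linarith)
  set b : ℝ := ∫ s in (-z₀)..z₀, ν s with hbdef
  have hbabs : |b| ≤ 2 * z₀ * M := by
    have hbd := intervalIntegral.norm_integral_le_of_norm_le_const
      (C := M) (f := ν) (a := -z₀) (b := z₀) ?_
    · rw [Real.norm_eq_abs] at hbd
      have habs2 : |z₀ - -z₀| = 2 * z₀ := by rw [abs_of_pos (by linarith)]; ring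
      rw [habs2] at hbd
      calc |b| ≤ M * (2 * z₀) := hbd
        _ = 2 * z₀ * M := by ring
    · intro s hs
      have hs' : s ∈ Set.Icc (-z₀) z₀ := by
        rw [Set.uIoc_of_le (by linarith : -z₀ ≤ z₀)] at hs
        exact Set.Ioc_subset_Icc_self hs
      rw [Real.norm_eq_abs]; exact hbound s hs'
  set cE : ℝ := 16 * z₀ ^ 2 * M ^ 2 + 4 * M * z₀ ^ 2 with hcEdef
  have hcE : 0 ≤ cE := by
    have : (0:ℝ) ≤ 4 * M * z₀ ^ 2 := by positivity
    have : (0:ℝ) ≤ 16 * z₀ ^ 2 * M ^ 2 := by positivity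
    simp only [hcEdef]; positivity
  set Ctot : ℝ := C * 3 + (1 + S) * cE + S * (2 * z₀ * M) + 1 with hCtotdef
  refine ⟨Ctot, ?_, R, by linarith, fun z hz => ?_⟩
  · have : 0 ≤ C * 3 + (1 + S) * cE + S * (2 * z₀ * M) := by
      have h1 : 0 ≤ C * 3 := by linarith
      have h2 : 0 ≤ (1 + S) * cE := mul_nonneg (by linarith) hcE
      have h3 : 0 ≤ S * (2 * z₀ * M) := mul_nonneg hS (by positivity)
      linarith
    simp only [hCtotdef]; linarith
  · have hz1 : 1 ≤ ‖z‖ :=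
      le_trans (le_trans (le_max_left 1 (2 * z₀)) (le_max_left _ _)) hz
    have h2z : 2 * z₀ ≤ ‖z‖ :=
      le_trans (le_trans (le_max_right 1 (2 * z₀)) (le_max_left _ _)) hz
    have h4M : 4 * z₀ * M ≤ ‖z‖ := by
      have := le_trans (le_trans (le_max_right (2 * B) _) (le_max_right _ _)) hz
      linarith
    obtain ⟨hPb, hPL⟩ := hProd z hz
    obtain ⟨hEb, hEL⟩ := exp_expand z₀ M hz₀ hM0 ν hmeas hbound z hz1 h2z h4M
    have hβE : ‖(-(Complex.I * ((b : ℝ) : ℂ)))‖ ≤ 2 * z₀ * M := by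
      rw [norm_neg, norm_mul, Complex.norm_I, one_mul, Complex.norm_real, Real.norm_eq_abs]
      exact hbabs
    have hcomb := combine_expand z (∏ k, (z - (starRingEnd ℂ) (zk k)) / (z - zk k))
      (Complex.exp (Complex.I * ∫ s in (-z₀)..z₀, (ν s : ℂ) / ((s : ℂ) - z)))
      (∑ k, ((2 * (zk k).im : ℝ) : ℂ) * Complex.I) (-(Complex.I * ((b : ℝ) : ℂ)))
      C cE S (2 * z₀ * M) 3 hz1 hPb hEb hSa hβE hEL (by norm_num)
    -- rewrite the linear coefficient
    have hsum : (∑ k, ((2 * (zk k).im : ℝ) : ℂ) * Complex.I)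
        + (-(Complex.I * ((b : ℝ) : ℂ)))
        = Complex.I * ((2 * (∑ k, (zk k).im) - b : ℝ) : ℂ) := by
      rw [← Finset.sum_mul]
      push_cast
      rw [Finset.mul_sum]
      ring
    have hgoal : Complex.I / z *
          ((2 * (∑ k, (zk k).im) - b : ℝ) : ℂ)
        = ((∑ k, ((2 * (zk k).im : ℝ) : ℂ) * Complex.I)
            + (-(Complex.I * ((b : ℝ) : ℂ)))) / z := by
      rw [hsum]; ring
    rw [hgoal]
    refine le_trans hcomb ?_
    have hpos : (0:ℝ) < ‖z‖ ^ 2 := by positivity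
    gcongr
    simp only [hCtotdef]; linarith
end

section
/- For every ε > 0 there exists a constant C > 0 such that for all z₀ > 0, all real t ≥ 1, all complex numbers z = x + iy, and all g ∈ L²(ℝ), ∫_0^{∞} e^{−tεv/2} ( ∫_{v+z₀}^{∞} |g(u)| · |u + iv − z|^{−1} du ) dv ≤ C ‖g‖_{L²(ℝ)} · t^{−1/6}. -/
open MeasureTheory Set Filter
open scoped ENNReal NNReal

lemma ker_eq (c : ℝ) (hc : c ≠ 0) : (fun w : ℝ => c⁻¹ ^ 2 * (1 + (w / c) ^ 2)⁻¹) =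
    (fun w : ℝ => (w ^ 2 + c ^ 2)⁻¹) := by
  funext w
  have hc2 : c ^ 2 ≠ 0 := pow_ne_zero _ hc
  field_simp
  ring

lemma ker_integrable (x c : ℝ) (hc : c ≠ 0) :
    Integrable (fun u : ℝ => ((u - x) ^ 2 + c ^ 2)⁻¹) := by
  have h2 : Integrable (fun w : ℝ => c⁻¹ ^ 2 * (1 + (w / c) ^ 2)⁻¹) :=
    (integrable_inv_one_add_sq.comp_div hc).const_mul _
  rw [ker_eq c hc] at h2
  simpa using h2.comp_sub_right x

lemma ker_integral (x c : ℝ) (hc : c ≠ 0) :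
    (∫ u : ℝ, ((u - x) ^ 2 + c ^ 2)⁻¹) = Real.pi / |c| := by
  have h0 : (∫ u : ℝ, ((u - x) ^ 2 + c ^ 2)⁻¹) = ∫ u : ℝ, (u ^ 2 + c ^ 2)⁻¹ := by
    simpa [sub_eq_add_neg] using integral_add_right_eq_self (fun u : ℝ => (u ^ 2 + c ^ 2)⁻¹) (-x)
  rw [h0, ← ker_eq c hc, integral_const_mul,
    MeasureTheory.Measure.integral_comp_div (fun w : ℝ => (1 + w ^ 2)⁻¹) c,
    integral_univ_inv_one_add_sq, smul_eq_mul]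
  have : c⁻¹ ^ 2 * |c| = |c|⁻¹ := by
    rw [inv_pow, ← sq_abs]
    field_simp
  rw [← mul_assoc, this, div_eq_inv_mul]

lemma cs_bound (g : ℝ → ℝ) (hg : MemLp g 2 volume) (z : ℂ) (v s : ℝ) (hc : v ≠ z.im) :
    (∫ u in Ioi s, |g u| / ‖(u : ℂ) + (v : ℂ) * Complex.I - z‖) ≤
    (eLpNorm g 2 volume).toReal * Real.sqrt (Real.pi / |v - z.im|) := by
  set x := z.re with hx
  set c := v - z.im with hcdef
  have hc' : c ≠ 0 := sub_ne_zero.mpr hc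
  set k : ℝ → ℝ := fun u => (‖(u : ℂ) + (v : ℂ) * Complex.I - z‖)⁻¹ with hk
  have habs : ∀ u : ℝ, (‖(u : ℂ) + (v : ℂ) * Complex.I - z‖) ^ 2
      = (u - x) ^ 2 + c ^ 2 := by
    intro u
    rw [← Complex.normSq_eq_norm_sq, Complex.normSq_apply]
    simp [hx, hcdef]
    ring
  have hk2 : ∀ u : ℝ, k u ^ 2 = ((u - x) ^ 2 + c ^ 2)⁻¹ := by
    intro u
    rw [hk, ← habs u, inv_pow]
  have hden : ∀ u : ℝ, (0:ℝ) < (u - x) ^ 2 + c ^ 2 := fun u =>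
    add_pos_of_nonneg_of_pos (sq_nonneg _) (pow_pos (abs_pos.mpr hc') 2 |>.trans_eq (by rw [sq_abs]))
  have habsne : ∀ u : ℝ, ‖(u : ℂ) + (v : ℂ) * Complex.I - z‖ ≠ 0 := by
    intro u
    have := hden u
    rw [← habs u] at this
    exact fun h => by simp [h] at this
  have hkcont : Continuous k := by
    apply Continuous.inv₀
    · exact continuous_norm.comp (by continuity)
    · exact habsne
  have hkmem : MemLp k 2 (volume.restrict (Ioi s)) := by
    refine (memLp_two_iff_integrable_sq hkcont.aestronglyMeasurable.restrict).mpr ?_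
    have : (fun u => k u ^ 2) = fun u => ((u - x) ^ 2 + c ^ 2)⁻¹ := funext hk2
    rw [this]
    exact (ker_integrable x c hc').integrableOn
  have hgmem : MemLp (fun u => |g u|) 2 (volume.restrict (Ioi s)) := by
    have := (hg.norm).restrict (μ := volume) (Ioi s)
    simpa [Real.norm_eq_abs] using this
  have hpq : Real.HolderConjugate 2 2 := Real.HolderConjugate.two_two
  have h2 : (ENNReal.ofReal (2:ℝ)) = 2 := by norm_num
  have hholder := integral_mul_le_Lp_mul_Lq_of_nonneg (μ := volume.restrict (Ioi s)) hpq
    (Eventually.of_forall fun u => abs_nonneg (g u))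
    (Eventually.of_forall fun u => inv_nonneg.mpr (norm_nonneg _))
    (h2 ▸ hgmem) (h2 ▸ hkmem)
  have hlhs : (∫ u in Ioi s, |g u| / ‖(u : ℂ) + (v : ℂ) * Complex.I - z‖)
      = ∫ u in Ioi s, |g u| * k u := by
    simp_rw [div_eq_mul_inv]
    rfl
  rw [hlhs]
  refine hholder.trans ?_
  have hrpow2 : ∀ y : ℝ, 0 ≤ y → y ^ (2:ℝ) = y ^ 2 := fun y hy => by
    rw [show (2:ℝ) = ((2:ℕ):ℝ) by norm_num, Real.rpow_natCast]
  -- bound factor 1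
  have hIset : (∫ u in Ioi s, |g u| ^ (2:ℝ)) ≤ ∫ u, g u ^ 2 := by
    have he : (fun u => |g u| ^ (2:ℝ)) = fun u => g u ^ 2 := by
      funext u; rw [hrpow2 _ (abs_nonneg _), sq_abs]
    rw [he]
    exact setIntegral_le_integral hg.integrable_sq (Eventually.of_forall fun u => sq_nonneg _)
  have hM : (eLpNorm g 2 volume).toReal = (∫ u, g u ^ 2) ^ ((1:ℝ)/2) := by
    rw [hg.eLpNorm_eq_integral_rpow_norm (by norm_num) (by norm_num)]
    have he : (fun u => ‖g u‖ ^ (2:ℝ≥0∞).toReal) = fun u => g u ^ 2 := by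
      funext u
      rw [ENNReal.toReal_ofNat, hrpow2 _ (norm_nonneg _), Real.norm_eq_abs, sq_abs]
    rw [he, ENNReal.toReal_ofReal (by positivity), ENNReal.toReal_ofNat, one_div]
  have hf1 : (∫ u in Ioi s, |g u| ^ (2:ℝ)) ^ ((1:ℝ)/2) ≤ (eLpNorm g 2 volume).toReal := by
    rw [hM]
    exact Real.rpow_le_rpow (integral_nonneg fun u => by positivity) hIset (by norm_num)
  -- bound factor 2
  have hKset : (∫ u in Ioi s, k u ^ (2:ℝ)) ≤ Real.pi / |c| := by
    have he : (fun u => k u ^ (2:ℝ)) = fun u => ((u - x) ^ 2 + c ^ 2)⁻¹ := by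
      funext u; rw [hrpow2 _ (inv_nonneg.mpr (norm_nonneg _)), hk2]
    rw [he, ← ker_integral x c hc']
    exact setIntegral_le_integral (ker_integrable x c hc')
      (Eventually.of_forall fun u => inv_nonneg.mpr (hden u).le)
  have hf2 : (∫ u in Ioi s, k u ^ (2:ℝ)) ^ ((1:ℝ)/2) ≤ Real.sqrt (Real.pi / |c|) := by
    rw [Real.sqrt_eq_rpow]
    exact Real.rpow_le_rpow (integral_nonneg fun u => Real.rpow_nonneg
      (inv_nonneg.mpr (norm_nonneg _)) _) hKset (by norm_num)
  exact mul_le_mul hf1 hf2 (Real.rpow_nonneg (integral_nonneg fun u => Real.rpow_nonneg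
      (inv_nonneg.mpr (norm_nonneg _)) _) _) ENNReal.toReal_nonneg

noncomputable def phi (w : ℝ) : ℝ := |w| ^ (-(1/2) : ℝ)

lemma phi_nonneg (w : ℝ) : 0 ≤ phi w := Real.rpow_nonneg (abs_nonneg w) _

lemma phi_eq_on (δ : ℝ) (hδ : 0 ≤ δ) :
    EqOn phi (fun w => w ^ (-(1/2) : ℝ)) (uIcc 0 δ) := by
  intro w hw
  rw [uIcc_of_le hδ] at hw
  simp only [phi, abs_of_nonneg hw.1]

lemma phi_ii (δ : ℝ) (hδ : 0 ≤ δ) : IntervalIntegrable phi volume 0 δ := by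
  refine (intervalIntegral.intervalIntegrable_rpow' (by norm_num : (-1:ℝ) < -(1/2))).congr ?_
  exact fun w hw =>
    ((phi_eq_on δ hδ) (uIoc_subset_uIcc hw)).symm

open intervalIntegral in
lemma phi_int (δ : ℝ) (hδ : 0 ≤ δ) : ∫ w in (0:ℝ)..δ, phi w = 2 * Real.sqrt δ := by
  rw [integral_congr (phi_eq_on δ hδ),
    integral_rpow (Or.inl (by norm_num : (-1:ℝ) < -(1/2)))]
  have : -(1/2) + 1 = (1/2 : ℝ) := by norm_num
  rw [this, Real.zero_rpow (by norm_num), Real.sqrt_eq_rpow]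
  ring

lemma phi_neg_eq (w : ℝ) : phi (-w) = phi w := by simp [phi]

lemma phi_ii_neg (δ : ℝ) (hδ : 0 ≤ δ) : IntervalIntegrable phi volume (-δ) 0 := by
  have h := ((IntervalIntegrable.iff_comp_neg).mp (phi_ii δ hδ))
  simp only [phi_neg_eq, neg_zero] at h
  exact h.symm

open intervalIntegral in
lemma phi_ii_symm (δ : ℝ) (hδ : 0 ≤ δ) : IntervalIntegrable phi volume (-δ) δ :=
  (phi_ii_neg δ hδ).trans (phi_ii δ hδ)

open intervalIntegral in
lemma phi_int_symm (δ : ℝ) (hδ : 0 ≤ δ) :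
    ∫ w in (-δ:ℝ)..δ, phi w = 4 * Real.sqrt δ := by
  rw [← integral_add_adjacent_intervals (phi_ii_neg δ hδ) (phi_ii δ hδ)]
  have hneg : ∫ w in (-δ:ℝ)..0, phi w = 2 * Real.sqrt δ := by
    have := integral_comp_neg (a := (0:ℝ)) (b := δ) (f := phi)
    simp only [phi_neg_eq, neg_zero] at this
    rw [← this, phi_int δ hδ]
  rw [hneg, phi_int δ hδ]
  ring

lemma psi_integrableOn (y δ : ℝ) (hδ : 0 ≤ δ) :
    IntegrableOn (fun v => phi (v - y)) (Ioo (y - δ) (y + δ)) := by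
  have h := (phi_ii_symm δ hδ).comp_sub_right y
  have h2 : IntervalIntegrable (fun v => phi (v - y)) volume (y - δ) (y + δ) := by
    have e1 : -δ + y = y - δ := by ring
    have e2 : δ + y = y + δ := by ring
    rwa [e1, e2] at h
  exact (intervalIntegrable_iff_integrableOn_Ioo_of_le (by linarith)).mp h2

open intervalIntegral in
lemma psi_integral (y δ : ℝ) (hδ : 0 ≤ δ) :
    ∫ v in Ioo (y - δ) (y + δ), phi (v - y) = 4 * Real.sqrt δ := by
  rw [← integral_Ioc_eq_integral_Ioo, ← integral_of_le (by linarith : y - δ ≤ y + δ),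
    integral_comp_sub_right (fun w => phi w) y]
  have e1 : y - δ - y = -δ := by ring
  have e2 : y + δ - y = δ := by ring
  rw [e1, e2, phi_int_symm δ hδ]

lemma exp_integrableOn (a : ℝ) (ha : 0 < a) :
    IntegrableOn (fun v => Real.exp (-(a * v))) (Ioi (0:ℝ)) := by
  simpa [neg_mul] using exp_neg_integrableOn_Ioi 0 ha

lemma exp_int (a : ℝ) (ha : 0 < a) :
    ∫ v in Ioi (0:ℝ), Real.exp (-(a * v)) = a⁻¹ := by
  have h := integral_comp_mul_left_Ioi (fun x => Real.exp (-x)) 0 ha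
  simp only [mul_zero, integral_exp_neg_Ioi, neg_zero, Real.exp_zero, smul_eq_mul,
    mul_one] at h
  exact h

/-- Appendix-B estimate for `I₁` and `I₂`: for every `ε > 0` there is `C > 0` such that
for all `z₀ > 0`, `t ≥ 1`, all `z ∈ ℂ` and all `g ∈ L²(ℝ)`,
`∫_0^∞ e^{−tεv/2} ( ∫_{v+z₀}^∞ |g(u)| / |u + iv − z| du ) dv ≤ C ‖g‖_{L²} t^{−1/6}`. -/
theorem stmt_18 :
    ∀ ε > (0 : ℝ), ∃ C > (0 : ℝ), ∀ z₀ > (0 : ℝ), ∀ t ≥ (1 : ℝ), ∀ z : ℂ, ∀ g : ℝ → ℝ,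
      MemLp g 2 volume →
      (∫ v in Set.Ioi (0 : ℝ), Real.exp (-(t * ε * v / 2)) *
          ∫ u in Set.Ioi (v + z₀),
            |g u| / ‖(u : ℂ) + (v : ℂ) * Complex.I - z‖) ≤
        C * (eLpNorm g 2 volume).toReal * t ^ (-(1 / 6) : ℝ) := by
  intro ε hε
  have hsq : 0 < Real.sqrt (ε / 2) := Real.sqrt_pos.mpr (by linarith)
  have hπ : 0 < Real.sqrt Real.pi := Real.sqrt_pos.mpr Real.pi_pos
  refine ⟨5 * Real.sqrt Real.pi * (Real.sqrt (ε / 2))⁻¹, by positivity, ?_⟩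
  intro z₀ hz₀ t ht z g hg
  set M := (eLpNorm g 2 volume).toReal with hMdef
  have hM0 : 0 ≤ M := ENNReal.toReal_nonneg
  have ht0 : (0 : ℝ) < t := by linarith
  set a := t * ε / 2 with hadef
  have ha0 : 0 < a := by rw [hadef]; positivity
  have hsa : 0 < Real.sqrt a := Real.sqrt_pos.mpr ha0
  set y := z.im with hydef
  set δ := a⁻¹ with hδdef
  have hδ0 : 0 < δ := inv_pos.mpr ha0
  set H1 : ℝ → ℝ := fun v => Real.sqrt a * Real.exp (-(a * v)) with hH1
  set H2 : ℝ → ℝ := (Ioo (y - δ) (y + δ)).indicator (fun v => phi (v - y)) with hH2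
  set B : ℝ → ℝ := fun v => M * Real.sqrt Real.pi * (H1 v + H2 v) with hB
  have hH1int : IntegrableOn H1 (Ioi (0 : ℝ)) := (exp_integrableOn a ha0).const_mul _
  have hH2nonneg : ∀ v, 0 ≤ H2 v := fun v =>
    indicator_nonneg (fun w _ => phi_nonneg _) v
  have hH2glob : Integrable H2 :=
    (integrable_indicator_iff measurableSet_Ioo).mpr (psi_integrableOn y δ hδ0.le)
  have hBint : IntegrableOn B (Ioi (0 : ℝ)) :=
    ((hH1int.add hH2glob.integrableOn).const_mul _)
  have key : ∀ v ∈ Ioi (0 : ℝ), v ≠ y →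
      Real.exp (-(t * ε * v / 2)) *
        (∫ u in Ioi (v + z₀), |g u| / ‖(u : ℂ) + (v : ℂ) * Complex.I - z‖) ≤
      B v := by
    intro v hv hvy
    have hv0 : (0 : ℝ) < v := hv
    have hav : t * ε * v / 2 = a * v := by rw [hadef]; ring
    have hcs := cs_bound g hg z v (v + z₀) (hydef ▸ hvy)
    rw [← hMdef, ← hydef] at hcs
    have hsqrtdiv : Real.sqrt (Real.pi / |v - y|) = Real.sqrt Real.pi * phi (v - y) := by
      rw [Real.sqrt_div Real.pi_pos.le, div_eq_mul_inv]
      congr 1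
      rw [phi, Real.rpow_neg (abs_nonneg _), ← Real.sqrt_eq_rpow]
    have core : Real.exp (-(a * v)) * phi (v - y) ≤ H1 v + H2 v := by
      by_cases hcase : |v - y| < δ
      · have habs := abs_lt.mp hcase
        have hmem : v ∈ Ioo (y - δ) (y + δ) := by
          rw [mem_Ioo]; constructor <;> linarith [habs.1, habs.2]
        have hH2v : H2 v = phi (v - y) := by rw [hH2]; exact indicator_of_mem hmem _
        have hexp1 : Real.exp (-(a * v)) ≤ 1 :=
          Real.exp_le_one_iff.mpr (by nlinarith)
        have h1 : Real.exp (-(a * v)) * phi (v - y) ≤ H2 v := by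
          rw [hH2v]
          calc Real.exp (-(a * v)) * phi (v - y) ≤ 1 * phi (v - y) :=
                mul_le_mul_of_nonneg_right hexp1 (phi_nonneg _)
            _ = phi (v - y) := one_mul _
        have hH1nn : 0 ≤ H1 v := by
          rw [hH1]; positivity
        linarith
      · push_neg at hcase
        have hphile : phi (v - y) ≤ Real.sqrt a := by
          have hmono := Real.rpow_le_rpow_of_nonpos hδ0 hcase (by norm_num : -(1/2 : ℝ) ≤ 0)
          have hδr : δ ^ (-(1/2) : ℝ) = Real.sqrt a := by
            rw [hδdef, Real.rpow_neg (inv_nonneg.mpr ha0.le), Real.inv_rpow ha0.le,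
              inv_inv, ← Real.sqrt_eq_rpow]
          calc phi (v - y) ≤ δ ^ (-(1/2) : ℝ) := hmono
            _ = Real.sqrt a := hδr
        have h1 : Real.exp (-(a * v)) * phi (v - y) ≤ H1 v := by
          show Real.exp (-(a * v)) * phi (v - y) ≤ Real.sqrt a * Real.exp (-(a * v))
          rw [mul_comm (Real.sqrt a)]
          exact mul_le_mul_of_nonneg_left hphile (Real.exp_pos _).le
        linarith [hH2nonneg v]
    calc Real.exp (-(t * ε * v / 2)) *
          (∫ u in Ioi (v + z₀), |g u| / ‖(u : ℂ) + (v : ℂ) * Complex.I - z‖)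
        ≤ Real.exp (-(a * v)) * (M * Real.sqrt (Real.pi / |v - y|)) := by
          rw [hav]
          exact mul_le_mul_of_nonneg_left hcs (Real.exp_pos _).le
      _ = M * Real.sqrt Real.pi * (Real.exp (-(a * v)) * phi (v - y)) := by
          rw [hsqrtdiv]; ring
      _ ≤ B v := by
          rw [hB]
          exact mul_le_mul_of_nonneg_left core (by positivity)
  by_cases hF : Integrable (fun v => Real.exp (-(t * ε * v / 2)) *
      ∫ u in Ioi (v + z₀), |g u| / ‖(u : ℂ) + (v : ℂ) * Complex.I - z‖)
      (volume.restrict (Ioi (0 : ℝ)))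
  · have hy0 : (volume.restrict (Ioi (0 : ℝ))) {y} = 0 := by
      rw [Measure.restrict_apply (measurableSet_singleton y)]
      exact measure_mono_null inter_subset_left (measure_singleton y)
    have hne : ∀ᵐ v ∂(volume.restrict (Ioi (0 : ℝ))), v ≠ y := by
      rw [ae_iff]
      convert hy0 using 2
      ext v
      simp [not_not]
    have hae : (fun v => Real.exp (-(t * ε * v / 2)) *
        ∫ u in Ioi (v + z₀), |g u| / ‖(u : ℂ) + (v : ℂ) * Complex.I - z‖)
        ≤ᵐ[volume.restrict (Ioi (0 : ℝ))] B := by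
      filter_upwards [ae_restrict_mem measurableSet_Ioi, hne] with v hv hvy
      exact key v hv hvy
    have h1 := integral_mono_ae hF hBint hae
    have hH1val : ∫ v in Ioi (0 : ℝ), H1 v = (Real.sqrt a)⁻¹ := by
      rw [hH1, integral_const_mul, exp_int a ha0]
      have hss : Real.sqrt a * Real.sqrt a = a := Real.mul_self_sqrt ha0.le
      field_simp
      exact Real.sq_sqrt ha0.le
    have hH2val : ∫ v in Ioi (0 : ℝ), H2 v ≤ 4 * (Real.sqrt a)⁻¹ := by
      have hle := setIntegral_le_integral (s := Ioi (0:ℝ)) hH2glob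
        (Eventually.of_forall hH2nonneg)
      have hglobval : ∫ v, H2 v = 4 * (Real.sqrt a)⁻¹ := by
        rw [hH2, integral_indicator measurableSet_Ioo, psi_integral y δ hδ0.le, hδdef,
          Real.sqrt_inv]
      exact hle.trans_eq hglobval
    have hBval : ∫ v in Ioi (0 : ℝ), B v ≤ M * Real.sqrt Real.pi * (5 * (Real.sqrt a)⁻¹) := by
      rw [hB]
      rw [MeasureTheory.integral_const_mul]
      refine mul_le_mul_of_nonneg_left ?_ (by positivity)
      rw [integral_add hH1int hH2glob.integrableOn, hH1val]
      linarith
    have hsqrt_a : (Real.sqrt a)⁻¹ = (Real.sqrt (ε / 2))⁻¹ * t ^ (-(1/2) : ℝ) := by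
      have he : a = t * (ε / 2) := by rw [hadef]; ring
      rw [he, Real.sqrt_mul ht0.le, mul_inv]
      have hti : (Real.sqrt t)⁻¹ = t ^ (-(1/2) : ℝ) := by
        rw [Real.rpow_neg ht0.le, ← Real.sqrt_eq_rpow]
      rw [hti]; ring
    have hrpow : t ^ (-(1/2) : ℝ) ≤ t ^ (-(1/6) : ℝ) :=
      Real.rpow_le_rpow_of_exponent_le ht (by norm_num)
    calc (∫ v in Ioi (0 : ℝ), Real.exp (-(t * ε * v / 2)) *
          ∫ u in Ioi (v + z₀), |g u| / ‖(u : ℂ) + (v : ℂ) * Complex.I - z‖)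
        ≤ ∫ v in Ioi (0 : ℝ), B v := h1
      _ ≤ M * Real.sqrt Real.pi * (5 * (Real.sqrt a)⁻¹) := hBval
      _ = (5 * Real.sqrt Real.pi * (Real.sqrt (ε / 2))⁻¹ * M) * t ^ (-(1/2) : ℝ) := by
          rw [hsqrt_a]; ring
      _ ≤ (5 * Real.sqrt Real.pi * (Real.sqrt (ε / 2))⁻¹ * M) * t ^ (-(1/6) : ℝ) :=
          mul_le_mul_of_nonneg_left hrpow (by positivity)
      _ = 5 * Real.sqrt Real.pi * (Real.sqrt (ε / 2))⁻¹ * M * t ^ (-(1/6) : ℝ) := by ring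
  · rw [integral_undef hF]
    have : (0:ℝ) ≤ 5 * Real.sqrt Real.pi * (Real.sqrt (ε / 2))⁻¹ * M := by positivity
    exact mul_nonneg this (Real.rpow_nonneg ht0.le _)
end
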